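/- arXiv:1912.04933 — 4 statements merged into one kernel-verified Lean document; each statement's English description precedes it below -/
import Mathlib

section
/- Let (a_i(q))_{i=0,...,k} and (b_i(q))_{i=0,...,l} be strongly q-log concave sequences of polynomials with nonnegative real coefficients. Define their convolution (c_i(q))_{i=0,...,k+l} by (Σ_i a_i(q) t^i)(Σ_i b_i(q) t^i) = Σ_i c_i(q) t^i. Then (c_i(q))_{i=0,...,k+l} is a strongly q-log concave sequence. -/
open Polynomial Finset

noncomputable section

/-- The number of inversions (the Coxeter length) of a permutation of `Fin n`. -/
def invNum {n : ℕ} (π : Equiv.Perm (Fin n)) : ℕ :=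
  (Finset.univ.filter fun p : Fin n × Fin n => p.1 < p.2 ∧ π p.2 < π p.1).card

/-- The descent set of a permutation, as a set of positive integers (1-indexed positions):
`i ∈ Des(π)` iff `1 ≤ i ≤ n-1` and `π_i > π_{i+1}` in one-line notation. -/
def DesSet {n : ℕ} (π : Equiv.Perm (Fin n)) : Finset ℕ :=
  (Finset.univ.filter fun a : Fin n => ∃ b : Fin n, (a : ℕ) + 1 = (b : ℕ) ∧ π b < π a).image
    fun a : Fin n => (a : ℕ) + 1

/-- The peak set of a permutation (1-indexed positions):
`i ∈ Peak(π)` iff `2 ≤ i ≤ n-1` and `π_{i-1} < π_i > π_{i+1}` in one-line notation. -/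
def PeakSet {n : ℕ} (π : Equiv.Perm (Fin n)) : Finset ℕ :=
  (Finset.univ.filter fun b : Fin n =>
      ∃ a c : Fin n, (a : ℕ) + 1 = (b : ℕ) ∧ (b : ℕ) + 1 = (c : ℕ) ∧ π a < π b ∧ π c < π b).image
    fun b : Fin n => (b : ℕ) + 1

/-- The q-integer `[j]_q = 1 + q + ⋯ + q^(j-1)`. -/
def qNum (j : ℕ) : Polynomial ℝ := ∑ i ∈ Finset.range j, X ^ i

/-- The q-factorial `[n]!_q = [1]_q [2]_q ⋯ [n]_q`. -/
def qFactorial : ℕ → Polynomial ℝ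
  | 0 => 1
  | n + 1 => qFactorial n * qNum (n + 1)

/-- The q-binomial coefficient `[n choose k]_q = [n]!_q / ([k]!_q [n-k]!_q)`.
(The divisor is monic and the division is exact, so `divByMonic` gives the true quotient.) -/
def qBinom (n k : ℕ) : Polynomial ℝ :=
  qFactorial n /ₘ (qFactorial k * qFactorial (n - k))

/-- `(−q;q)_k = (1+q)(1+q²)⋯(1+q^k)`. -/
def qPoch (k : ℕ) : Polynomial ℝ := ∏ i ∈ Finset.range k, (1 + X ^ (i + 1))

/-- `D_S(n,q) = Σ_{π ∈ 𝔖_n, Des(π) = S} q^{ℓ(π)}`. -/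
def Dpoly (S : Finset ℕ) (n : ℕ) : Polynomial ℝ :=
  ∑ π ∈ Finset.univ.filter (fun π : Equiv.Perm (Fin n) => DesSet π = S), X ^ invNum π

/-- `P_S(n,q) = Σ_{π ∈ 𝔖_n, Peak(π) = S} q^{ℓ(π)}`. -/
def Ppoly (S : Finset ℕ) (n : ℕ) : Polynomial ℝ :=
  ∑ π ∈ Finset.univ.filter (fun π : Equiv.Perm (Fin n) => PeakSet π = S), X ^ invNum π

/-- `Q_S(n,q) = Σ_{π ∈ 𝔖_n, Peak(π) ⊇ S} q^{ℓ(π)}`. -/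
def Qpoly (S : Finset ℕ) (n : ℕ) : Polynomial ℝ :=
  ∑ π ∈ Finset.univ.filter (fun π : Equiv.Perm (Fin n) => S ⊆ PeakSet π), X ^ invNum π

/-- The sequence `(a i)` for `lo ≤ i ≤ hi` is strongly q-log concave: it has no internal
zeroes and `a i * a j - a (i-1) * a (j+1)` has nonnegative coefficients for `lo < i ≤ j < hi`. -/
def StronglyQLogConcave (lo hi : ℕ) (a : ℕ → Polynomial ℝ) : Prop :=
  (∀ i j l : ℕ, lo ≤ i → i < j → j < l → l ≤ hi → a i ≠ 0 → a l ≠ 0 → a j ≠ 0) ∧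
  ∀ i j : ℕ, lo < i → i ≤ j → j < hi → ∀ m : ℕ,
    0 ≤ (a i * a j - a (i - 1) * a (j + 1)).coeff m


/-- auxiliary: extension of a finite sequence of polynomials to integer indices -/
def Fz (k : ℕ) (a : ℕ → Polynomial ℝ) (p : ℤ) : Polynomial ℝ :=
  if 0 ≤ p ∧ p ≤ (k : ℤ) then a p.toNat else 0

lemma Fz_eq_zero {k : ℕ} {a : ℕ → Polynomial ℝ} {p : ℤ} (h : p < 0 ∨ (k : ℤ) < p) :
    Fz k a p = 0 := by
  unfold Fz; rw [if_neg]; omega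

lemma Fz_bounds {k : ℕ} {a : ℕ → Polynomial ℝ} {p : ℤ} (h : Fz k a p ≠ 0) :
    0 ≤ p ∧ p ≤ (k : ℤ) ∧ a p.toNat ≠ 0 := by
  by_cases hp : 0 ≤ p ∧ p ≤ (k : ℤ)
  · refine ⟨hp.1, hp.2, ?_⟩; unfold Fz at h; rwa [if_pos hp] at h
  · exact absurd (Fz_eq_zero (by omega)) h

lemma Fz_nonneg {k : ℕ} {a : ℕ → Polynomial ℝ} (hnn : ∀ i m, 0 ≤ (a i).coeff m)
    (p : ℤ) (m : ℕ) : 0 ≤ (Fz k a p).coeff m := by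
  unfold Fz
  split
  · exact hnn _ _
  · simp

lemma coeff_mul_nonneg (p q : Polynomial ℝ) (hp : ∀ m, 0 ≤ p.coeff m)
    (hq : ∀ m, 0 ≤ q.coeff m) (m : ℕ) : 0 ≤ (p * q).coeff m := by
  rw [Polynomial.coeff_mul]
  exact Finset.sum_nonneg fun x _ => mul_nonneg (hp _) (hq _)

lemma Fz_step {k : ℕ} {a : ℕ → Polynomial ℝ} (hnn : ∀ i m, 0 ≤ (a i).coeff m)
    (ha : StronglyQLogConcave 0 k a) {r s : ℤ} (hrs : r ≤ s) (m : ℕ) :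
    0 ≤ (Fz k a r * Fz k a s - Fz k a (r - 1) * Fz k a (s + 1)).coeff m := by
  rcases le_or_gt r 0 with h0 | h0
  · rw [Fz_eq_zero (p := r - 1) (Or.inl (by omega)), zero_mul, sub_zero]
    exact coeff_mul_nonneg _ _ (Fz_nonneg hnn r) (Fz_nonneg hnn s) m
  rcases le_or_gt (k : ℤ) s with hk | hk
  · rw [Fz_eq_zero (p := s + 1) (Or.inr (by omega)), mul_zero, sub_zero]
    exact coeff_mul_nonneg _ _ (Fz_nonneg hnn r) (Fz_nonneg hnn s) m
  · -- 0 < r ≤ s < k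
    have h1 : Fz k a r = a r.toNat := by unfold Fz; rw [if_pos]; omega
    have h2 : Fz k a s = a s.toNat := by unfold Fz; rw [if_pos]; omega
    have h3 : Fz k a (r - 1) = a (r.toNat - 1) := by
      unfold Fz; rw [if_pos (by omega)]; congr 1; omega
    have h4 : Fz k a (s + 1) = a (s.toNat + 1) := by
      unfold Fz; rw [if_pos (by omega)]; congr 1; omega
    rw [h1, h2, h3, h4]
    exact ha.2 r.toNat s.toNat (by omega) (by omega) (by omega) m

lemma Fz_multi {k : ℕ} {a : ℕ → Polynomial ℝ} (hnn : ∀ i m, 0 ≤ (a i).coeff m)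
    (ha : StronglyQLogConcave 0 k a) :
    ∀ (t : ℕ) {α β : ℤ}, α ≤ β → ∀ m : ℕ,
      0 ≤ (Fz k a α * Fz k a β - Fz k a (α - t) * Fz k a (β + t)).coeff m := by
  intro t
  induction t with
  | zero => intro α β _ m; simp
  | succ t ih =>
    intro α β hab m
    have key : Fz k a α * Fz k a β - Fz k a (α - (t + 1 : ℕ)) * Fz k a (β + (t + 1 : ℕ)) =
        (Fz k a α * Fz k a β - Fz k a (α - 1) * Fz k a (β + 1)) +
        (Fz k a (α - 1) * Fz k a (β + 1) -
          Fz k a ((α - 1) - t) * Fz k a ((β + 1) + t)) := by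
      have e1 : α - (t + 1 : ℕ) = (α - 1) - t := by push_cast; ring
      have e2 : β + (t + 1 : ℕ) = (β + 1) + t := by push_cast; ring
      rw [e1, e2]; ring
    rw [key, Polynomial.coeff_add]
    exact add_nonneg (Fz_step hnn ha hab m) (ih (by omega) m)

lemma Fz_minor {k : ℕ} {a : ℕ → Polynomial ℝ} (hnn : ∀ i m, 0 ≤ (a i).coeff m)
    (ha : StronglyQLogConcave 0 k a) {α β t : ℤ} (ht : 0 ≤ t) (h : α - β ≤ t) (m : ℕ) :
    0 ≤ (Fz k a α * Fz k a β - Fz k a (α - t) * Fz k a (β + t)).coeff m := by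
  rcases le_or_gt α β with hab | hab
  · have := Fz_multi hnn ha t.toNat hab m
    rwa [Int.toNat_of_nonneg ht] at this
  · have ht' : (0:ℤ) ≤ t - (α - β) := by omega
    have := Fz_multi hnn ha (t - (α - β)).toNat (le_of_lt hab) m
    rw [Int.toNat_of_nonneg ht'] at this
    have e1 : β - (t - (α - β)) = α - t := by ring
    have e2 : α + (t - (α - β)) = β + t := by ring
    rw [e1, e2] at this
    calc (0:ℝ) ≤ (Fz k a β * Fz k a α - Fz k a (α - t) * Fz k a (β + t)).coeff m := this
      _ = (Fz k a α * Fz k a β - Fz k a (α - t) * Fz k a (β + t)).coeff m := by ring_nf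

lemma Fz_interval {k : ℕ} {a : ℕ → Polynomial ℝ} (ha : StronglyQLogConcave 0 k a)
    {u v w : ℤ} (huv : u ≤ v) (hvw : v ≤ w)
    (hu : Fz k a u ≠ 0) (hw : Fz k a w ≠ 0) : Fz k a v ≠ 0 := by
  obtain ⟨hu0, huk, hua⟩ := Fz_bounds hu
  obtain ⟨hw0, hwk, hwa⟩ := Fz_bounds hw
  have hv : Fz k a v = a v.toNat := by unfold Fz; rw [if_pos]; omega
  rw [hv]
  rcases eq_or_lt_of_le huv with rfl | huv'
  · rwa [show u.toNat = u.toNat from rfl] at hua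
  rcases eq_or_lt_of_le hvw with rfl | hvw'
  · exact hwa
  · exact ha.1 u.toNat v.toNat w.toNat (by omega) (by omega) (by omega) (by omega) hua hwa


def convZ (k l : ℕ) (a b : ℕ → Polynomial ℝ) (n : ℤ) : Polynomial ℝ :=
  ∑ p ∈ Finset.Icc (0 : ℤ) (k : ℤ), Fz k a p * Fz l b (n - p)

lemma main_pos (k l : ℕ) (a b : ℕ → Polynomial ℝ)
    (ha_nonneg : ∀ i m, 0 ≤ (a i).coeff m) (hb_nonneg : ∀ i m, 0 ≤ (b i).coeff m)
    (ha : StronglyQLogConcave 0 k a) (hb : StronglyQLogConcave 0 l b)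
    {m n : ℤ} (hmn : m ≤ n) (mm : ℕ) :
    0 ≤ (convZ k l a b m * convZ k l a b n -
      convZ k l a b (m - 1) * convZ k l a b (n + 1)).coeff mm := by
  set B : Finset (ℤ × ℤ) := Finset.Icc (0 : ℤ) ((k : ℤ) + 1) ×ˢ Finset.Icc (-1 : ℤ) (k : ℤ)
    with hB
  have memB : ∀ p : ℤ × ℤ, p ∈ B ↔ (0 ≤ p.1 ∧ p.1 ≤ (k:ℤ) + 1 ∧ -1 ≤ p.2 ∧ p.2 ≤ (k:ℤ)) := by
    intro p
    simp [hB, Finset.mem_product, Finset.mem_Icc, and_assoc]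
  have A1 : convZ k l a b m * convZ k l a b n =
      ∑ p ∈ B, (Fz k a p.1 * Fz l b (m - p.1)) * (Fz k a p.2 * Fz l b (n - p.2)) := by
    rw [convZ, convZ, Finset.sum_mul_sum, ← Finset.sum_product']
    apply Finset.sum_subset
    · intro p hp
      rw [Finset.mem_product, Finset.mem_Icc, Finset.mem_Icc] at hp
      rw [memB]; omega
    · intro p hpB hpP
      rw [Finset.mem_product, Finset.mem_Icc, Finset.mem_Icc] at hpP
      rw [memB] at hpB
      have : Fz k a p.1 = 0 ∨ Fz k a p.2 = 0 := by
        rcases (by omega : p.1 < 0 ∨ (k:ℤ) < p.1 ∨ p.2 < 0 ∨ (k:ℤ) < p.2) with h|h|h|h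
        · exact Or.inl (Fz_eq_zero (Or.inl h))
        · exact Or.inl (Fz_eq_zero (Or.inr h))
        · exact Or.inr (Fz_eq_zero (Or.inl h))
        · exact Or.inr (Fz_eq_zero (Or.inr h))
      rcases this with h|h <;> rw [h] <;> ring
  have A2 : convZ k l a b (m - 1) * convZ k l a b (n + 1) =
      ∑ p ∈ B, (Fz k a (p.1 - 1) * Fz k a (p.2 + 1)) * (Fz l b (m - p.1) * Fz l b (n - p.2)) := by
    rw [convZ, convZ, Finset.sum_mul_sum, ← Finset.sum_product']
    refine (Finset.sum_nbij' (fun p : ℤ × ℤ => (p.1 + 1, p.2 - 1))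
      (fun p : ℤ × ℤ => (p.1 - 1, p.2 + 1))
      (t := (Finset.Icc (1:ℤ) ((k:ℤ)+1)) ×ˢ (Finset.Icc (-1:ℤ) ((k:ℤ)-1)))
      (g := fun p => (Fz k a (p.1 - 1) * Fz k a (p.2 + 1)) * (Fz l b (m - p.1) * Fz l b (n - p.2)))
      ?_ ?_ ?_ ?_ ?_).trans (Finset.sum_subset ?_ ?_)
    · intro p hp
      simp only [Finset.mem_product, Finset.mem_Icc] at hp ⊢
      omega
    · intro p hp
      simp only [Finset.mem_product, Finset.mem_Icc] at hp ⊢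
      omega
    · intro p _; simp
    · intro p _; simp
    · intro p _
      simp only [add_sub_cancel_right, sub_add_cancel]
      have e1 : m - 1 - p.1 = m - (p.1 + 1) := by ring
      have e2 : n + 1 - p.2 = n - (p.2 - 1) := by ring
      rw [e1, e2]
      ring
    · intro p hp
      simp only [Finset.mem_product, Finset.mem_Icc] at hp
      rw [memB]; omega
    · intro p hpB hpP
      simp only [Finset.mem_product, Finset.mem_Icc] at hpP
      rw [memB] at hpB
      have : Fz k a (p.1 - 1) = 0 ∨ Fz k a (p.2 + 1) = 0 := by
        rcases (by omega : p.1 - 1 < 0 ∨ (k:ℤ) < p.2 + 1) with h|h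
        · exact Or.inl (Fz_eq_zero (Or.inl h))
        · exact Or.inr (Fz_eq_zero (Or.inr h))
      rcases this with h|h <;> rw [h] <;> ring
  set T : ℤ × ℤ → Polynomial ℝ := fun p =>
    (Fz k a p.1 * Fz k a p.2 - Fz k a (p.1 - 1) * Fz k a (p.2 + 1)) *
      (Fz l b (m - p.1) * Fz l b (n - p.2)) with hT
  have key : convZ k l a b m * convZ k l a b n -
      convZ k l a b (m - 1) * convZ k l a b (n + 1) = ∑ p ∈ B, T p := by
    rw [A1, A2, ← Finset.sum_sub_distrib]
    apply Finset.sum_congr rfl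
    intro p _
    simp only [hT]
    ring
  rw [key]
  have split : ∑ p ∈ B, T p =
      ∑ p ∈ B.filter (fun p => p.1 ≤ p.2), (T p + T (p.2 + 1, p.1 - 1)) := by
    rw [← Finset.sum_filter_add_sum_filter_not B (fun p => p.1 ≤ p.2) T]
    rw [Finset.sum_add_distrib]
    congr 1
    rw [← Finset.sum_filter_add_sum_filter_not (B.filter (fun p => ¬ p.1 ≤ p.2))
      (fun p => p.1 = p.2 + 1) T]
    have z1 : ∑ p ∈ (B.filter (fun p => ¬ p.1 ≤ p.2)).filter (fun p => p.1 = p.2 + 1),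
        T p = 0 := by
      apply Finset.sum_eq_zero
      intro p hp
      rw [Finset.mem_filter] at hp
      obtain ⟨-, he⟩ := hp
      simp only [hT, he]
      have : Fz k a (p.2 + 1) * Fz k a p.2 - Fz k a (p.2 + 1 - 1) * Fz k a (p.2 + 1) = 0 := by
        rw [add_sub_cancel_right]; ring
      rw [this, zero_mul]
    rw [z1, zero_add]
    apply Finset.sum_nbij' (fun p : ℤ × ℤ => (p.2 + 1, p.1 - 1))
      (fun p : ℤ × ℤ => (p.2 + 1, p.1 - 1))
    · intro p hp
      simp only [Finset.mem_filter, memB, not_le] at hp ⊢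
      omega
    · intro p hp
      simp only [Finset.mem_filter, memB, not_le] at hp ⊢
      omega
    · intro p _; simp
    · intro p _; simp
    · intro p _
      congr 1
      simp
  rw [split, Polynomial.finset_sum_coeff]
  apply Finset.sum_nonneg
  intro p hp
  rw [Finset.mem_filter, memB] at hp
  obtain ⟨hpB, hple⟩ := hp
  obtain ⟨r, s⟩ := p
  simp only at hple hpB
  have expand : T (r, s) + T (s + 1, r - 1) =
      (Fz k a r * Fz k a s - Fz k a (r - 1) * Fz k a (s + 1)) *
        (Fz l b (m - r) * Fz l b (n - s) -
          Fz l b (m - r - (s - r + 1)) * Fz l b (n - s + (s - r + 1))) := by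
    simp only [hT]
    have e1 : s + 1 - 1 = s := by ring
    have e2 : r - 1 + 1 = r := by ring
    have e3 : m - (s + 1) = m - r - (s - r + 1) := by ring
    have e4 : n - (r - 1) = n - s + (s - r + 1) := by ring
    rw [e1, e2, e3, e4]
    ring
  rw [expand]
  apply coeff_mul_nonneg
  · exact Fz_step ha_nonneg ha hple
  · intro mm'
    exact Fz_minor hb_nonneg hb (by omega) (by omega) mm'

lemma coeff_seq (k : ℕ) (a : ℕ → Polynomial ℝ) (u : ℕ) :
    (∑ i ∈ Finset.range (k + 1), C (a i) * X ^ i).coeff u = Fz k a ((u : ℤ)) := by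
  rw [Polynomial.finset_sum_coeff]
  simp only [Polynomial.coeff_C_mul, Polynomial.coeff_X_pow, mul_ite, mul_one, mul_zero]
  rw [Finset.sum_ite_eq (Finset.range (k + 1)) u a]
  unfold Fz
  by_cases h : u ≤ k
  · rw [if_pos (by simp; omega), if_pos (by omega)]
    simp
  · rw [if_neg (by simp; omega), if_neg (by omega)]

lemma cform (k l : ℕ) (a b c : ℕ → Polynomial ℝ)
    (hc : (∑ i ∈ Finset.range (k + l + 1), Polynomial.C (c i) * Polynomial.X ^ i) =
        (∑ i ∈ Finset.range (k + 1), Polynomial.C (a i) * Polynomial.X ^ i) *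
          (∑ i ∈ Finset.range (l + 1), Polynomial.C (b i) * Polynomial.X ^ i))
    {n : ℕ} (hn : n ≤ k + l) : c n = convZ k l a b n := by
  have h := congrArg (fun P => P.coeff n) hc
  simp only [Polynomial.coeff_mul] at h
  rw [Polynomial.finset_sum_coeff] at h
  simp only [Polynomial.coeff_C_mul, Polynomial.coeff_X_pow, mul_ite, mul_one, mul_zero] at h
  rw [Finset.sum_ite_eq (Finset.range (k + l + 1)) n c, if_pos (by simp; omega)] at h
  rw [h]
  simp only [coeff_seq]
  -- now: ∑ x in antidiagonal n, Fz k a x.1 * Fz l b x.2 = convZ k l a b n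
  rw [Finset.Nat.sum_antidiagonal_eq_sum_range_succ_mk]
  rw [convZ]
  have RHS : ∑ p ∈ Finset.Icc (0 : ℤ) (k : ℤ), Fz k a p * Fz l b ((n : ℤ) - p) =
      ∑ u ∈ Finset.range (k + 1), Fz k a (u : ℤ) * Fz l b ((n : ℤ) - (u : ℤ)) := by
    apply Finset.sum_nbij' (fun p : ℤ => p.toNat) (fun u : ℕ => (u : ℤ))
    · intro p hp; rw [Finset.mem_Icc] at hp; rw [Finset.mem_range]; omega
    · intro u hu; rw [Finset.mem_range] at hu; rw [Finset.mem_Icc]; omega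
    · intro p hp; rw [Finset.mem_Icc] at hp; omega
    · intro u _; simp
    · intro p hp
      rw [Finset.mem_Icc] at hp
      rw [Int.toNat_of_nonneg hp.1]
  rw [RHS]
  have L1 : (∑ u ∈ Finset.range (n + 1), Fz k a (u : ℤ) * Fz l b (((n - u : ℕ) : ℤ))) =
      ∑ u ∈ Finset.range (n + 1), Fz k a (u : ℤ) * Fz l b ((n : ℤ) - (u : ℤ)) := by
    apply Finset.sum_congr rfl
    intro u hu
    rw [Finset.mem_range] at hu
    rw [show (((n - u : ℕ)) : ℤ) = (n : ℤ) - (u : ℤ) from by omega]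
  have L2 : (∑ u ∈ Finset.range (n + 1), Fz k a (u : ℤ) * Fz l b ((n : ℤ) - (u : ℤ))) =
      ∑ u ∈ Finset.range (k + n + 1), Fz k a (u : ℤ) * Fz l b ((n : ℤ) - (u : ℤ)) := by
    apply Finset.sum_subset
    · exact Finset.range_subset_range.2 (by omega)
    · intro u _ hu
      rw [Finset.mem_range, not_lt] at hu
      rw [Fz_eq_zero (p := (n : ℤ) - (u : ℤ)) (Or.inl (by omega)), mul_zero]
  have R : (∑ u ∈ Finset.range (k + 1), Fz k a (u : ℤ) * Fz l b ((n : ℤ) - (u : ℤ))) =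
      ∑ u ∈ Finset.range (k + n + 1), Fz k a (u : ℤ) * Fz l b ((n : ℤ) - (u : ℤ)) := by
    apply Finset.sum_subset
    · exact Finset.range_subset_range.2 (by omega)
    · intro u _ hu
      rw [Finset.mem_range, not_lt] at hu
      rw [Fz_eq_zero (p := (u : ℤ)) (Or.inr (by omega)), zero_mul]
  rw [L1, L2, R]

lemma convZ_ne_zero_iff (k l : ℕ) (a b : ℕ → Polynomial ℝ)
    (ha_nonneg : ∀ i m, 0 ≤ (a i).coeff m) (hb_nonneg : ∀ i m, 0 ≤ (b i).coeff m)
    (n : ℤ) :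
    convZ k l a b n ≠ 0 ↔ ∃ p : ℤ, Fz k a p ≠ 0 ∧ Fz l b (n - p) ≠ 0 := by
  constructor
  · intro h
    by_contra hno
    push_neg at hno
    apply h
    rw [convZ]
    apply Finset.sum_eq_zero
    intro p _
    rcases Classical.em (Fz k a p = 0) with h1 | h1
    · rw [h1, zero_mul]
    · rw [hno p h1, mul_zero]
  · rintro ⟨p, hp, hq⟩
    obtain ⟨hp0, hpk, -⟩ := Fz_bounds hp
    have hterm : Fz k a p * Fz l b (n - p) ≠ 0 := mul_ne_zero hp hq
    obtain ⟨mm, hmm⟩ : ∃ mm, (Fz k a p * Fz l b (n - p)).coeff mm ≠ 0 := by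
      by_contra hcc
      push_neg at hcc
      exact hterm (Polynomial.ext_iff.2 (by simpa using hcc))
    intro h0
    have : (convZ k l a b n).coeff mm = 0 := by rw [h0]; simp
    rw [convZ, Polynomial.finset_sum_coeff] at this
    have hpos : 0 < ∑ q ∈ Finset.Icc (0 : ℤ) (k : ℤ), (Fz k a q * Fz l b (n - q)).coeff mm := by
      apply Finset.sum_pos'
      · intro q _
        exact coeff_mul_nonneg (Fz k a q) (Fz l b (n - q)) (Fz_nonneg ha_nonneg q) (Fz_nonneg hb_nonneg _) mm
      · refine ⟨p, by rw [Finset.mem_Icc]; omega, ?_⟩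
        have := coeff_mul_nonneg (Fz k a p) (Fz l b (n - p)) (Fz_nonneg ha_nonneg p) (Fz_nonneg hb_nonneg (n - p)) mm
        rcases lt_or_eq_of_le this with h | h
        · exact h
        · exact absurd h.symm hmm
    exact hpos.ne' this

lemma convZ_no_internal_zero (k l : ℕ) (a b : ℕ → Polynomial ℝ)
    (ha_nonneg : ∀ i m, 0 ≤ (a i).coeff m) (hb_nonneg : ∀ i m, 0 ≤ (b i).coeff m)
    (ha : StronglyQLogConcave 0 k a) (hb : StronglyQLogConcave 0 l b)
    {i j w : ℤ} (hij : i ≤ j) (hjw : j ≤ w)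
    (hi : convZ k l a b i ≠ 0) (hw : convZ k l a b w ≠ 0) : convZ k l a b j ≠ 0 := by
  rw [convZ_ne_zero_iff k l a b ha_nonneg hb_nonneg] at hi hw ⊢
  obtain ⟨p₁, hp₁, hq₁⟩ := hi
  obtain ⟨p₂, hp₂, hq₂⟩ := hw
  set q₁ := i - p₁ with hq₁d
  set q₂ := w - p₂ with hq₂d
  have ei : i = p₁ + q₁ := by omega
  have ew : w = p₂ + q₂ := by omega
  obtain ⟨hA1, hA2, -⟩ := Fz_bounds hp₁
  obtain ⟨hA3, hA4, -⟩ := Fz_bounds hp₂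
  obtain ⟨hB1, hB2, -⟩ := Fz_bounds hq₁
  obtain ⟨hB3, hB4, -⟩ := Fz_bounds hq₂
  have hminp : Fz k a (min p₁ p₂) ≠ 0 := by
    rcases le_total p₁ p₂ with h | h
    · rwa [min_eq_left h]
    · rwa [min_eq_right h]
  have hmaxp : Fz k a (max p₁ p₂) ≠ 0 := by
    rcases le_total p₁ p₂ with h | h
    · rwa [max_eq_right h]
    · rwa [max_eq_left h]
  have hminq : Fz l b (min q₁ q₂) ≠ 0 := by
    rcases le_total q₁ q₂ with h | h
    · rwa [min_eq_left h]
    · rwa [min_eq_right h]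
  have hmaxq : Fz l b (max q₁ q₂) ≠ 0 := by
    rcases le_total q₁ q₂ with h | h
    · rwa [max_eq_right h]
    · rwa [max_eq_left h]
  refine ⟨max (min p₁ p₂) (j - max q₁ q₂), ?_, ?_⟩
  · exact Fz_interval ha (u := min p₁ p₂) (w := max p₁ p₂) (by omega) (by omega) hminp hmaxp
  · exact Fz_interval hb (u := min q₁ q₂) (w := max q₁ q₂) (by omega) (by omega) hminq hmaxq

/-- the convolution of two strongly q-log concave sequences of polynomials
with nonnegative real coefficients is strongly q-log concave. -/
theorem stmt0 (k l : ℕ) (a b c : ℕ → Polynomial ℝ)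
    (ha_nonneg : ∀ i, ∀ m : ℕ, 0 ≤ (a i).coeff m)
    (hb_nonneg : ∀ i, ∀ m : ℕ, 0 ≤ (b i).coeff m)
    (ha : StronglyQLogConcave 0 k a) (hb : StronglyQLogConcave 0 l b)
    (hc : (∑ i ∈ Finset.range (k + l + 1), Polynomial.C (c i) * Polynomial.X ^ i) =
        (∑ i ∈ Finset.range (k + 1), Polynomial.C (a i) * Polynomial.X ^ i) *
          (∑ i ∈ Finset.range (l + 1), Polynomial.C (b i) * Polynomial.X ^ i)) :
    StronglyQLogConcave 0 (k + l) c := by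
  constructor
  · intro i j w h0i hij hjw hwkl hi hw
    rw [cform k l a b c hc (show i ≤ k + l by omega)] at hi
    rw [cform k l a b c hc (show w ≤ k + l by omega)] at hw
    rw [cform k l a b c hc (show j ≤ k + l by omega)]
    exact convZ_no_internal_zero k l a b ha_nonneg hb_nonneg ha hb
      (show (i : ℤ) ≤ (j : ℤ) by exact_mod_cast hij.le)
      (show (j : ℤ) ≤ (w : ℤ) by exact_mod_cast hjw.le) hi hw
  · intro i j h0i hij hjkl m
    have h1 := cform k l a b c hc (show i ≤ k + l by omega)
    have h2 := cform k l a b c hc (show j ≤ k + l by omega)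
    have h3 := cform k l a b c hc (show i - 1 ≤ k + l by omega)
    have h4 := cform k l a b c hc (show j + 1 ≤ k + l by omega)
    rw [show (((i - 1 : ℕ)) : ℤ) = (i : ℤ) - 1 from by omega] at h3
    rw [show (((j + 1 : ℕ)) : ℤ) = (j : ℤ) + 1 from by push_cast; ring] at h4
    rw [h1, h2, h3, h4]
    exact main_pos k l a b ha_nonneg hb_nonneg ha hb
      (show (i : ℤ) ≤ (j : ℤ) by exact_mod_cast hij) m

end
end

section
/- Let (b_i(q))_{i=0,...,k} be a strongly q-log concave sequence of polynomials with nonnegative real coefficients, and define c_i(q) = b_0(q) + b_1(q) + ... + b_i(q) for 0 ≤ i ≤ k. Then (c_i(q))_{i=0,...,k} is a strongly q-log concave sequence. -/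
open Polynomial Finset

noncomputable section

lemma sqlc_key (k : ℕ) (b : ℕ → Polynomial ℝ)
    (hb2 : ∀ i j : ℕ, 0 < i → i ≤ j → j < k → ∀ m : ℕ,
      0 ≤ (b i * b j - b (i - 1) * b (j + 1)).coeff m) :
    ∀ d p q : ℕ, d ≤ p → p ≤ q → q + d ≤ k → ∀ m : ℕ,
      0 ≤ (b p * b q - b (p - d) * b (q + d)).coeff m := by
  intro d
  induction d with
  | zero => intro p q _ _ _ m; simp
  | succ d ih =>
    intro p q hdp hpq hqd m
    have h1 : p - (d + 1) = p - d - 1 := by omega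
    have h2 : q + (d + 1) = q + d + 1 := by omega
    have heq : b p * b q - b (p - (d + 1)) * b (q + (d + 1)) =
        (b p * b q - b (p - d) * b (q + d)) +
        (b (p - d) * b (q + d) - b (p - d - 1) * b (q + d + 1)) := by
      rw [h1, h2]; ring
    rw [heq, Polynomial.coeff_add]
    exact add_nonneg (ih p q (by omega) hpq (by omega) m)
      (hb2 (p - d) (q + d) (by omega) (by omega) (by omega) m)

lemma sqlc_key2 (k : ℕ) (b : ℕ → Polynomial ℝ)
    (hb2 : ∀ i j : ℕ, 0 < i → i ≤ j → j < k → ∀ m : ℕ,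
      0 ≤ (b i * b j - b (i - 1) * b (j + 1)).coeff m) :
    ∀ p q p' q' : ℕ, p' ≤ p → p ≤ q → q ≤ q' → p + q = p' + q' → q' ≤ k → ∀ m : ℕ,
      0 ≤ (b p * b q - b p' * b q').coeff m := by
  intro p q p' q' h1 h2 h3 h4 h5 m
  have hd : p - (p - p') = p' := by omega
  have hq : q + (p - p') = q' := by omega
  have := sqlc_key k b hb2 (p - p') p q (by omega) h2 (by omega) m
  rwa [hd, hq] at this

/-- partial sums of a strongly q-log concave sequence of polynomials with
nonnegative real coefficients form a strongly q-log concave sequence. -/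
theorem stmt1 (k : ℕ) (b c : ℕ → Polynomial ℝ)
    (hb_nonneg : ∀ i, ∀ m : ℕ, 0 ≤ (b i).coeff m)
    (hb : StronglyQLogConcave 0 k b)
    (hc : ∀ i ≤ k, c i = ∑ j ∈ Finset.range (i + 1), b j) :
    StronglyQLogConcave 0 k c := by
  obtain ⟨_, hb2⟩ := hb
  have hb2' : ∀ i j : ℕ, 0 < i → i ≤ j → j < k → ∀ m : ℕ,
      0 ≤ (b i * b j - b (i - 1) * b (j + 1)).coeff m := fun i j h1 h2 h3 m =>
    hb2 i j h1 h2 h3 m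
  constructor
  · intro i j l hi hij hjl hlk hci _
    have hex : ∃ m, (c i).coeff m ≠ 0 := by
      by_contra h
      push_neg at h
      exact hci (Polynomial.ext (by simp [h]))
    obtain ⟨m, hm⟩ := hex
    rw [hc i (by omega), Polynomial.finset_sum_coeff] at hm
    have hpos : 0 < ∑ t ∈ Finset.range (i + 1), (b t).coeff m :=
      lt_of_le_of_ne (Finset.sum_nonneg fun t _ => hb_nonneg t m) (Ne.symm hm)
    intro h0
    have hz : (c j).coeff m = 0 := by rw [h0]; simp
    rw [hc j (by omega), Polynomial.finset_sum_coeff] at hz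
    have hle : ∑ t ∈ Finset.range (i + 1), (b t).coeff m ≤
        ∑ t ∈ Finset.range (j + 1), (b t).coeff m :=
      Finset.sum_le_sum_of_subset_of_nonneg
        (Finset.range_subset_range.mpr (by omega)) (fun t _ _ => hb_nonneg t m)
    exact absurd hz (ne_of_gt (lt_of_lt_of_le hpos hle))
  · intro i j hi hij hjk m
    have hik : i ≤ k := by omega
    have hi1k : i - 1 ≤ k := by omega
    have hjk' : j ≤ k := by omega
    have hj1k : j + 1 ≤ k := by omega
    have hi1 : i - 1 + 1 = i := by omega
    have hij1 : i ≤ j + 1 := by omega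
    have hsplit : j + 1 = (j + 1 - i) + i := by omega
    have heq : c i * c j - c (i - 1) * c (j + 1) =
        (∑ s ∈ Finset.range (j + 1 - i), b i * b s) +
        ∑ x ∈ Finset.range i, (b i * b (j + 1 - i + x) - b x * b (j + 1)) := by
      rw [hc i hik, hc (i - 1) hi1k, hc j hjk', hc (j + 1) hj1k, hi1,
        Finset.sum_range_succ (n := i), Finset.sum_range_succ (n := j + 1)]
      rw [Finset.sum_sub_distrib]
      have e1 : (∑ x ∈ Finset.range i, b x + b i) * (∑ s ∈ Finset.range (j + 1), b s) -
          (∑ x ∈ Finset.range i, b x) * ((∑ s ∈ Finset.range (j + 1), b s) + b (j + 1)) =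
          b i * (∑ s ∈ Finset.range (j + 1), b s) -
          (∑ x ∈ Finset.range i, b x) * b (j + 1) := by ring
      rw [e1, Finset.mul_sum, Finset.sum_mul]
      rw [show (∑ s ∈ Finset.range (j + 1), b i * b s) =
          ∑ s ∈ Finset.range ((j + 1 - i) + i), b i * b s from by rw [← hsplit],
        Finset.sum_range_add]
      ring
    rw [heq, Polynomial.coeff_add, Polynomial.finset_sum_coeff,
      Polynomial.finset_sum_coeff]
    refine add_nonneg (Finset.sum_nonneg fun s _ => ?_) (Finset.sum_nonneg fun x hx => ?_)
    · rw [Polynomial.coeff_mul]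
      exact Finset.sum_nonneg fun p _ => mul_nonneg (hb_nonneg _ _) (hb_nonneg _ _)
    · rw [Finset.mem_range] at hx
      rcases le_total i (j + 1 - i + x) with h | h
      · exact sqlc_key2 k b hb2' i (j + 1 - i + x) x (j + 1)
          (by omega) h (by omega) (by omega) (by omega) m
      · have := sqlc_key2 k b hb2' (j + 1 - i + x) i x (j + 1)
          (by omega) h (by omega) (by omega) (by omega) m
        rwa [mul_comm (b (j + 1 - i + x)) (b i)] at this

end
end

section
/- Let S ⊂ Z_{>0} be a nonempty finite set of positive integers with m = max(S). Then for all integers n ≥ m + 1, D_S(n,q) = Σ_{k=0}^{m} a_k(S;q) · [n−m choose k]_q, where a_0(S;q) = 0 and for k ≥ 1, a_k(S;q) = Σ q^{ℓ(π)}, the sum being over all π ∈ A(S; m+k) such that [m+1, m+k] ⊆ {π_1, ..., π_m}. -/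
open Polynomial Finset

noncomputable section

lemma qNum_monic (j : ℕ) : (qNum (j+1)).Monic := by
  have h : qNum (j+1) = X ^ j + ∑ i ∈ range j, X ^ i := by
    rw [qNum, sum_range_succ]; ring
  rw [h]
  apply monic_X_pow_add
  refine lt_of_le_of_lt (degree_sum_le _ _) ?_
  rw [Finset.sup_lt_iff (by exact WithBot.bot_lt_coe j)]
  intro i hi
  simp only [degree_X_pow]
  exact_mod_cast mem_range.mp hi

lemma qFactorial_monic (n : ℕ) : (qFactorial n).Monic := by
  induction n with
  | zero => exact monic_one
  | succ n ih => exact ih.mul (qNum_monic n)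

lemma qNum_add (a b : ℕ) : qNum (a + b) = qNum a + X ^ a * qNum b := by
  rw [qNum, qNum, qNum, Finset.sum_range_add, Finset.mul_sum]
  congr 1
  exact Finset.sum_congr rfl fun i _ => by rw [pow_add]

def qStat (K : Finset ℕ) : ℕ := ∑ v ∈ K, (v - (K.filter (· < v)).card)

def qG (N k : ℕ) : Polynomial ℝ := ∑ K ∈ powersetCard k (range N), X ^ qStat K

lemma qStat_insert_top (K : Finset ℕ) (N : ℕ) (hK : ∀ v ∈ K, v < N) (hN : N ∉ K) :
    qStat (insert N K) = qStat K + (N - K.card) := by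
  unfold qStat
  rw [Finset.sum_insert hN]
  have h1 : (insert N K).filter (· < N) = K := by
    ext u
    simp only [mem_filter, mem_insert]
    constructor
    · rintro ⟨h | h, hu⟩
      · omega
      · exact h
    · intro h
      exact ⟨Or.inr h, hK u h⟩
  have h2 : ∀ v ∈ K, v - ((insert N K).filter (· < v)).card = v - (K.filter (· < v)).card := by
    intro v hv
    congr 2
    ext u
    simp only [mem_filter, mem_insert]
    constructor
    · rintro ⟨h | h, hu⟩
      · exfalso; have := hK v hv; omega
      · exact ⟨h, hu⟩
    · rintro ⟨h, hu⟩
      exact ⟨Or.inr h, hu⟩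
  rw [h1, Finset.sum_congr rfl h2]
  exact Nat.add_comm _ _

lemma qG_zero (N : ℕ) : qG N 0 = 1 := by
  simp [qG, powersetCard_zero, qStat]

lemma qStat_range (N : ℕ) : qStat (range N) = 0 := by
  unfold qStat
  refine Finset.sum_eq_zero fun v hv => ?_
  have : (range N).filter (· < v) = range v := by
    ext u; simp only [mem_filter, mem_range]
    rw [mem_range] at hv; omega
  rw [this, card_range]; omega

lemma qG_self (N : ℕ) : qG N N = 1 := by
  have h := Finset.powersetCard_self (range N)
  rw [card_range] at h
  rw [qG, h, sum_singleton, qStat_range, pow_zero]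

lemma qG_big (N k : ℕ) (h : N < k) : qG N k = 0 := by
  rw [qG, powersetCard_eq_empty.mpr (by rw [card_range]; exact h), sum_empty]

lemma qG_pascal (N k : ℕ) : qG (N+1) (k+1) = qG N (k+1) + X ^ (N - k) * qG N k := by
  have hrange : range (N+1) = insert N (range N) := by rw [range_add_one]
  have hN : N ∉ range N := by simp
  rw [qG, hrange, powersetCard_succ_insert hN, Finset.sum_union, qG, qG, Finset.mul_sum]
  · congr 1
    rw [Finset.sum_image]
    · refine Finset.sum_congr rfl fun K hK => ?_
      rw [mem_powersetCard] at hK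
      have hKN : N ∉ K := fun h => hN (hK.1 h)
      rw [qStat_insert_top K N (fun v hv => mem_range.mp (hK.1 hv)) hKN, hK.2, pow_add,
        mul_comm]
    · intro K hK L hL hKL
      rw [mem_coe, mem_powersetCard] at hK hL
      have : ∀ P : Finset ℕ, P ⊆ range N → insert N P \ {N} = P := by
        intro P hP
        rw [insert_sdiff_of_mem _ (mem_singleton_self N), sdiff_singleton_eq_erase,
          erase_eq_of_notMem (fun h => hN (hP h))]
      rw [← this K hK.1, ← this L hL.1, hKL]
  · rw [Finset.disjoint_left]
    intro K hK hK2
    rw [mem_powersetCard] at hK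
    rw [Finset.mem_image] at hK2
    obtain ⟨L, _, rfl⟩ := hK2
    exact hN (hK.1 (mem_insert_self N L))

lemma qFactorial_succ (n : ℕ) : qFactorial (n+1) = qFactorial n * qNum (n+1) := rfl

lemma qG_mul : ∀ N k, k ≤ N → qG N k * (qFactorial k * qFactorial (N - k)) = qFactorial N := by
  intro N
  induction N with
  | zero =>
    intro k hk
    interval_cases k
    simp [qG_zero, qFactorial]
  | succ N ih =>
    intro k hk
    match k, hk with
    | 0, _ => simp [qG_zero, qFactorial]
    | (k+1), hk =>
      rcases Nat.lt_or_ge k N with hkN | hkN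
      · have hA := ih (k+1) hkN
        have hB := ih k (by omega)
        have hC : qFactorial (k+1) = qFactorial k * qNum (k+1) := rfl
        have hD : qFactorial (N - k) = qFactorial (N - (k+1)) * qNum (N - k) := by
          have h : N - k = (N - (k+1)) + 1 := by omega
          rw [h, qFactorial_succ, ← h]
        have hq : qNum (N+1) = qNum (N - k) + X ^ (N - k) * qNum (k+1) := by
          have h : N + 1 = (N - k) + (k+1) := by omega
          rw [h, qNum_add]
        have hE : N + 1 - (k + 1) = N - k := by omega
        rw [qG_pascal, hE, qFactorial_succ N]
        linear_combination (qG N (k+1) * qFactorial (k+1)) * hD + qNum (N-k) * hA +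
          (X^(N-k) * qG N k * qFactorial (N-k)) * hC + (X^(N-k) * qNum (k+1)) * hB -
          qFactorial N * hq
      · have hk' : k = N := by omega
        rw [hk', qG_pascal, qG_big N (N+1) (by omega), qG_self, Nat.sub_self, pow_zero,
          mul_one, zero_add, one_mul, Nat.sub_self]
        have h0 : qFactorial 0 = 1 := rfl
        rw [h0, mul_one]

lemma qBinom_eq_qG (N k : ℕ) (h : k ≤ N) : qBinom N k = qG N k := by
  rw [qBinom, ← qG_mul N k h, mul_comm]
  exact mul_divByMonic_cancel_left _ ((qFactorial_monic k).mul (qFactorial_monic (N - k)))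


lemma mem_desSet_iff {n : ℕ} (π : Equiv.Perm (Fin n)) (t : ℕ) :
    t ∈ DesSet π ↔ ∃ (h1 : 1 ≤ t) (h2 : t < n), π ⟨t, h2⟩ < π ⟨t - 1, by omega⟩ := by
  unfold DesSet
  simp only [Finset.mem_image, Finset.mem_filter, Finset.mem_univ, true_and]
  constructor
  · rintro ⟨a, ⟨b, hab, hb⟩, rfl⟩
    have hbn := b.isLt
    refine ⟨by omega, by omega, ?_⟩
    have h1 : (⟨(a:ℕ) + 1, by omega⟩ : Fin n) = b := Fin.ext (by simp [hab])
    have h2 : (⟨(a:ℕ) + 1 - 1, by omega⟩ : Fin n) = a := Fin.ext (by simp)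
    rw [h1, h2]
    exact hb
  · rintro ⟨h1, h2, hlt⟩
    exact ⟨⟨t - 1, by omega⟩, ⟨⟨t, h2⟩, by simp; omega, hlt⟩, by simp; omega⟩

lemma suffix_mono {n : ℕ} (π : Equiv.Perm (Fin n)) {S : Finset ℕ} (hD : DesSet π = S)
    {m : ℕ} (hSm : ∀ s ∈ S, s ≤ m) :
    ∀ i j : Fin n, m ≤ (i : ℕ) → i < j → π i < π j := by
  have step : ∀ i : Fin n, m ≤ (i : ℕ) → ∀ (h : (i : ℕ) + 1 < n), π i < π ⟨(i : ℕ) + 1, h⟩ := by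
    intro i hi h
    by_contra hc
    push_neg at hc
    have hne : π ⟨(i : ℕ) + 1, h⟩ ≠ π i := by
      intro he
      have h2 := congrArg Fin.val (π.injective he)
      simp only [Fin.val_mk] at h2
      omega
    have hlt : π ⟨(i : ℕ) + 1, h⟩ < π i := lt_of_le_of_ne hc hne
    have hmem : (i : ℕ) + 1 ∈ DesSet π := by
      rw [mem_desSet_iff]
      refine ⟨by omega, h, ?_⟩
      have h2 : (⟨(i : ℕ) + 1 - 1, by omega⟩ : Fin n) = i := Fin.ext (by simp)
      rw [h2]
      exact hlt
    rw [hD] at hmem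
    have := hSm _ hmem
    omega
  have key : ∀ d : ℕ, ∀ i : Fin n, m ≤ (i : ℕ) → ∀ (h : (i : ℕ) + 1 + d < n),
      π i < π ⟨(i : ℕ) + 1 + d, h⟩ := by
    intro d
    induction d with
    | zero => intro i hi h; exact step i hi h
    | succ d ih =>
      intro i hi h
      have h' : (i : ℕ) + 1 + d < n := by omega
      refine lt_trans (ih i hi h') ?_
      exact step ⟨(i : ℕ) + 1 + d, h'⟩ (by simp; omega) (by simp; omega)
  intro i j hi hij
  have hij' : (i : ℕ) < (j : ℕ) := hij
  have h : (i : ℕ) + 1 + ((j : ℕ) - (i : ℕ) - 1) < n := by have := j.isLt; omega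
  have hkey := key ((j : ℕ) - (i : ℕ) - 1) i hi h
  have he : (⟨(i : ℕ) + 1 + ((j : ℕ) - (i : ℕ) - 1), h⟩ : Fin n) = j := Fin.ext (by simp; omega)
  rwa [he] at hkey

lemma card_fin_filter_lt (a b : ℕ) (hab : a ≤ b) :
    (Finset.univ.filter fun i : Fin b => (i : ℕ) < a).card = a := by
  have key : (Finset.univ.filter fun i : Fin b => (i : ℕ) < a).card = (Finset.range a).card := by
    refine Finset.card_nbij (i := fun (i : Fin b) => (i : ℕ)) ?_ ?_ ?_
    · intro x hx
      simp only [Finset.mem_coe, Finset.mem_filter, Finset.mem_univ, true_and] at hx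
      simpa using hx
    · intro x _ y _ h
      exact Fin.ext h
    · intro y hy
      simp only [Finset.coe_range, Set.mem_Iio] at hy
      refine ⟨⟨y, by omega⟩, ?_, rfl⟩
      simp only [Finset.coe_filter, Set.mem_setOf_eq, Finset.mem_univ, true_and]
      omega
  rw [key, Finset.card_range]

lemma card_fin_filter_ge (a b : ℕ) (hab : a ≤ b) :
    (Finset.univ.filter fun i : Fin b => a ≤ (i : ℕ)).card = b - a := by
  have h := Finset.card_filter_add_card_filter_not (s := (univ : Finset (Fin b)))
    (p := fun i : Fin b => (i : ℕ) < a)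
  simp only [not_lt, Finset.card_univ, Fintype.card_fin] at h
  rw [card_fin_filter_lt a b hab] at h
  omega

lemma card_fin_filter_interval (a c b : ℕ) (hac : a ≤ c) (hcb : c < b) :
    (Finset.univ.filter fun i : Fin b => a ≤ (i : ℕ) ∧ (i : ℕ) ≤ c).card = c + 1 - a := by
  have key : (Finset.univ.filter fun i : Fin b => a ≤ (i : ℕ) ∧ (i : ℕ) ≤ c).card
      = (Finset.Icc a c).card := by
    refine Finset.card_nbij (i := fun (i : Fin b) => (i : ℕ)) ?_ ?_ ?_
    · intro x hx
      simp only [Finset.mem_coe, Finset.mem_filter, Finset.mem_univ, true_and] at hx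
      simp only [Finset.mem_coe, Finset.mem_Icc]
      exact hx
    · intro x _ y _ h
      exact Fin.ext h
    · intro y hy
      simp only [Finset.coe_Icc, Set.mem_Icc] at hy
      refine ⟨⟨y, by omega⟩, ?_, rfl⟩
      simp only [Finset.coe_filter, Set.mem_setOf_eq, Finset.mem_univ, true_and]
      omega
  rw [key, Nat.card_Icc]

section Core

variable {m N k : ℕ} {K : Finset ℕ}

lemma Mcard (hsub : K ⊆ range N) (hcard : K.card = k) : (range N \ K).card = N - k := by
  rw [Finset.card_sdiff_of_subset hsub, Finset.card_range, hcard]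

variable (hsub : K ⊆ range N) (hcard : K.card = k)

def Ffun (m : ℕ) (hsub : K ⊆ range N) (hcard : K.card = k) : Fin (m + N) → Fin (m + N) :=
  fun v =>
    if _ : (v : ℕ) < m then v
    else if h2 : (v : ℕ) < m + k then
      ⟨m + K.orderEmbOfFin hcard ⟨(v : ℕ) - m, by omega⟩, by
        have := Finset.mem_range.mp (hsub (Finset.orderEmbOfFin_mem K hcard ⟨(v : ℕ) - m, by omega⟩))
        omega⟩
    else
      ⟨m + (range N \ K).orderEmbOfFin (Mcard hsub hcard) ⟨(v : ℕ) - m - k, by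
          have := v.isLt; omega⟩, by
        have := Finset.mem_range.mp (Finset.sdiff_subset
          (Finset.orderEmbOfFin_mem (range N \ K) (Mcard hsub hcard) ⟨(v : ℕ) - m - k, by
            have := v.isLt; omega⟩))
        omega⟩

lemma FL1 {v : Fin (m + N)} (h : (v : ℕ) < m) : Ffun m hsub hcard v = v := by
  simp only [Ffun]
  rw [dif_pos h]

lemma FL2 {v : Fin (m + N)} (h1 : m ≤ (v : ℕ)) (h2 : (v : ℕ) < m + k) :
    (Ffun m hsub hcard v : ℕ) = m + K.orderEmbOfFin hcard ⟨(v : ℕ) - m, by omega⟩ := by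
  simp only [Ffun]
  rw [dif_neg (by omega), dif_pos h2]

lemma FL3 {v : Fin (m + N)} (h1 : m + k ≤ (v : ℕ)) :
    (Ffun m hsub hcard v : ℕ)
      = m + (range N \ K).orderEmbOfFin (Mcard hsub hcard) ⟨(v : ℕ) - m - k, by
          have := v.isLt; omega⟩ := by
  simp only [Ffun]
  rw [dif_neg (by omega), dif_neg (by omega)]

lemma FL2' (i : Fin k) (v : Fin (m + N)) (hv : (v : ℕ) = m + (i : ℕ)) :
    (Ffun m hsub hcard v : ℕ) = m + K.orderEmbOfFin hcard i := by
  have h1 : m ≤ (v : ℕ) := by omega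
  have h2 : (v : ℕ) < m + k := by have := i.isLt; omega
  rw [FL2 hsub hcard h1 h2]
  congr 2
  exact Fin.ext (by simp; omega)

lemma FL3' (j : Fin (N - k)) (v : Fin (m + N)) (hv : (v : ℕ) = m + k + (j : ℕ)) :
    (Ffun m hsub hcard v : ℕ) = m + (range N \ K).orderEmbOfFin (Mcard hsub hcard) j := by
  have h1 : m + k ≤ (v : ℕ) := by omega
  rw [FL3 hsub hcard h1]
  congr 2
  exact Fin.ext (by simp; omega)

lemma Fge {v : Fin (m + N)} (h : m ≤ (v : ℕ)) : m ≤ (Ffun m hsub hcard v : ℕ) := by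
  rcases Nat.lt_or_ge (v : ℕ) (m + k) with h2 | h2
  · rw [FL2 hsub hcard h h2]; omega
  · rw [FL3 hsub hcard h2]; omega

lemma Fsmall_iff {v : Fin (m + N)} : (Ffun m hsub hcard v : ℕ) < m ↔ (v : ℕ) < m := by
  constructor
  · intro h
    by_contra hc
    push_neg at hc
    have := Fge hsub hcard hc
    omega
  · intro h
    rw [FL1 hsub hcard h]
    exact h

lemma Fmono {a b : Fin (m + N)} (hab : (a : ℕ) < (b : ℕ))
    (hbad : ¬(m ≤ (a : ℕ) ∧ (a : ℕ) < m + k ∧ m + k ≤ (b : ℕ))) :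
    (Ffun m hsub hcard a : ℕ) < (Ffun m hsub hcard b : ℕ) := by
  rcases Nat.lt_or_ge (a : ℕ) m with ha | ha
  · rw [FL1 hsub hcard ha]
    rcases Nat.lt_or_ge (b : ℕ) m with hb | hb
    · rw [FL1 hsub hcard hb]; exact hab
    · have := Fge hsub hcard hb; omega
  · rcases Nat.lt_or_ge (a : ℕ) (m + k) with ha2 | ha2
    · rcases Nat.lt_or_ge (b : ℕ) (m + k) with hb2 | hb2
      · rw [FL2 hsub hcard ha ha2, FL2 hsub hcard (by omega) hb2]
        have := (K.orderEmbOfFin hcard).strictMono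
          (show (⟨(a : ℕ) - m, by omega⟩ : Fin k) < ⟨(b : ℕ) - m, by omega⟩ by
            simp [Fin.lt_def]; omega)
        omega
      · exact absurd ⟨ha, ha2, hb2⟩ hbad
    · have hb2 : m + k ≤ (b : ℕ) := by omega
      rw [FL3 hsub hcard ha2, FL3 hsub hcard hb2]
      have hbl := b.isLt
      have := ((range N \ K).orderEmbOfFin (Mcard hsub hcard)).strictMono
        (show (⟨(a : ℕ) - m - k, by have := a.isLt; omega⟩ : Fin (N - k))
            < ⟨(b : ℕ) - m - k, by omega⟩ by
          simp [Fin.lt_def]; omega)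
      omega

lemma Finj : Function.Injective (Ffun m hsub hcard) := by
  intro a b h
  have hv : (Ffun m hsub hcard a : ℕ) = (Ffun m hsub hcard b : ℕ) := by rw [h]
  have key : ∀ x y : Fin (m + N), (x : ℕ) < (y : ℕ) →
      (Ffun m hsub hcard x : ℕ) = (Ffun m hsub hcard y : ℕ) → False := by
    intro x y hxy hf
    by_cases hbad : m ≤ (x : ℕ) ∧ (x : ℕ) < m + k ∧ m + k ≤ (y : ℕ)
    · obtain ⟨h1, h2, h3⟩ := hbad
      have hx := FL2 hsub hcard h1 h2
      have hy := FL3 hsub hcard h3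
      have hKmem := Finset.orderEmbOfFin_mem K hcard ⟨(x : ℕ) - m, by omega⟩
      have hMmem := Finset.orderEmbOfFin_mem (range N \ K) (Mcard hsub hcard)
        ⟨(y : ℕ) - m - k, by have := y.isLt; omega⟩
      rw [Finset.mem_sdiff] at hMmem
      have : K.orderEmbOfFin hcard ⟨(x : ℕ) - m, by omega⟩
          = (range N \ K).orderEmbOfFin (Mcard hsub hcard) ⟨(y : ℕ) - m - k, by
              have := y.isLt; omega⟩ := by omega
      rw [this] at hKmem
      exact hMmem.2 hKmem
    · have := Fmono hsub hcard hxy hbad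
      omega
  rcases Nat.lt_trichotomy (a : ℕ) (b : ℕ) with hlt | heq | hgt
  · exact absurd hv (by intro hc; exact key a b hlt hc)
  · exact Fin.ext heq
  · exact absurd hv (by intro hc; exact key b a hgt hc.symm)

def fPerm (m : ℕ) (hsub : K ⊆ range N) (hcard : K.card = k) : Equiv.Perm (Fin (m + N)) :=
  Equiv.ofBijective (Ffun m hsub hcard) (Finite.injective_iff_bijective.mp (Finj hsub hcard))

lemma fPerm_apply (v : Fin (m + N)) : fPerm m hsub hcard v = Ffun m hsub hcard v := rfl

end Core

section Pad

variable {m k N : ℕ}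

/-- Fin (m+k) as the subtype of Fin (m+N) of elements < m+k (needs m+k ≤ m+N). -/
def eEquiv (m k N : ℕ) (hkN : k ≤ N) : Fin (m + k) ≃ {x : Fin (m + N) // (x : ℕ) < m + k} where
  toFun i := ⟨⟨(i : ℕ), by have := i.isLt; omega⟩, by simpa using i.isLt⟩
  invFun x := ⟨((x : Fin (m + N)) : ℕ), x.2⟩
  left_inv i := by ext; simp
  right_inv x := by ext; simp

def pad (hkN : k ≤ N) (σ : Equiv.Perm (Fin (m + k))) : Equiv.Perm (Fin (m + N)) :=
  σ.extendDomain (eEquiv m k N hkN)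

lemma pad_apply_lt (hkN : k ≤ N) (σ : Equiv.Perm (Fin (m + k))) (x : Fin (m + N))
    (h : (x : ℕ) < m + k) :
    (pad hkN σ x : ℕ) = (σ ⟨(x : ℕ), h⟩ : ℕ) := by
  rw [pad, Equiv.Perm.extendDomain_apply_subtype σ (eEquiv m k N hkN) h]
  rfl

lemma pad_apply_ge (hkN : k ≤ N) (σ : Equiv.Perm (Fin (m + k))) (x : Fin (m + N))
    (h : m + k ≤ (x : ℕ)) :
    pad hkN σ x = x := by
  rw [pad, Equiv.Perm.extendDomain_apply_not_subtype σ (eEquiv m k N hkN) (by omega)]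

lemma pad_lt_iff (hkN : k ≤ N) (σ : Equiv.Perm (Fin (m + k))) (x : Fin (m + N)) :
    (pad hkN σ x : ℕ) < m + k ↔ (x : ℕ) < m + k := by
  constructor
  · intro h
    by_contra hc
    push_neg at hc
    rw [pad_apply_ge hkN σ x hc] at h
    omega
  · intro h
    rw [pad_apply_lt hkN σ x h]
    exact (σ ⟨(x : ℕ), h⟩).isLt

lemma inv_pair_lt (hkN : k ≤ N) (σ : Equiv.Perm (Fin (m + k))) (p : Fin (m + N) × Fin (m + N))
    (h1 : p.1 < p.2) (h2 : pad hkN σ p.2 < pad hkN σ p.1) :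
    (p.1 : ℕ) < m + k ∧ (p.2 : ℕ) < m + k := by
  have h1' : (p.1 : ℕ) < (p.2 : ℕ) := h1
  have h2' : (pad hkN σ p.2 : ℕ) < (pad hkN σ p.1 : ℕ) := h2
  have hb1 : (p.1 : ℕ) < m + k := by
    by_contra hc
    push_neg at hc
    have e1 : (pad hkN σ p.1 : ℕ) = (p.1 : ℕ) := by rw [pad_apply_ge hkN σ p.1 hc]
    have e2 : (pad hkN σ p.2 : ℕ) = (p.2 : ℕ) := by rw [pad_apply_ge hkN σ p.2 (by omega)]
    omega
  refine ⟨hb1, ?_⟩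
  by_contra hc
  push_neg at hc
  have e2 : (pad hkN σ p.2 : ℕ) = (p.2 : ℕ) := by rw [pad_apply_ge hkN σ p.2 hc]
  have e1 := (pad_lt_iff hkN σ p.1).mpr hb1
  omega

lemma invNum_pad (hkN : k ≤ N) (σ : Equiv.Perm (Fin (m + k))) :
    invNum (pad hkN σ) = invNum σ := by
  unfold invNum
  apply Finset.card_bij (i := fun p hp =>
    ((⟨(p.1 : ℕ), by
        have hmem := hp
        simp only [Finset.mem_filter, Finset.mem_univ, true_and] at hmem
        exact (inv_pair_lt hkN σ p hmem.1 hmem.2).1⟩ : Fin (m + k)),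
     (⟨(p.2 : ℕ), by
        have hmem := hp
        simp only [Finset.mem_filter, Finset.mem_univ, true_and] at hmem
        exact (inv_pair_lt hkN σ p hmem.1 hmem.2).2⟩ : Fin (m + k))))
  · intro p hp
    simp only [Finset.mem_filter, Finset.mem_univ, true_and] at hp ⊢
    obtain ⟨h1, h2⟩ := hp
    obtain ⟨hb1, hb2⟩ := inv_pair_lt hkN σ p h1 h2
    refine ⟨h1, ?_⟩
    have e1 := pad_apply_lt hkN σ p.1 hb1
    have e2 := pad_apply_lt hkN σ p.2 hb2
    have h2' : (pad hkN σ p.2 : ℕ) < (pad hkN σ p.1 : ℕ) := h2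
    rw [e1, e2] at h2'
    exact h2'
  · intro p1 hp1 p2 hp2 he
    simp only [Prod.mk.injEq, Fin.mk.injEq] at he
    exact Prod.ext (Fin.ext he.1) (Fin.ext he.2)
  · intro q hq
    simp only [Finset.mem_filter, Finset.mem_univ, true_and] at hq
    obtain ⟨h1, h2⟩ := hq
    refine ⟨((⟨(q.1 : ℕ), by have := q.1.isLt; omega⟩ : Fin (m + N)),
      (⟨(q.2 : ℕ), by have := q.2.isLt; omega⟩ : Fin (m + N))), ?_, ?_⟩
    · simp only [Finset.mem_filter, Finset.mem_univ, true_and]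
      refine ⟨h1, ?_⟩
      have e1 := pad_apply_lt hkN σ ⟨(q.1 : ℕ), by have := q.1.isLt; omega⟩ (by simp)
      have e2 := pad_apply_lt hkN σ ⟨(q.2 : ℕ), by have := q.2.isLt; omega⟩ (by simp)
      show (pad hkN σ _ : ℕ) < (pad hkN σ _ : ℕ)
      rw [e1, e2]
      have hq1 : (⟨((⟨(q.1 : ℕ), by have := q.1.isLt; omega⟩ : Fin (m+N)) : ℕ), by simp⟩ : Fin (m+k)) = q.1 := Fin.ext (by simp)
      have hq2 : (⟨((⟨(q.2 : ℕ), by have := q.2.isLt; omega⟩ : Fin (m+N)) : ℕ), by simp⟩ : Fin (m+k)) = q.2 := Fin.ext (by simp)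
      rw [hq1, hq2]
      exact h2
    · exact Prod.ext (Fin.ext (by simp)) (Fin.ext (by simp))

end Pad

section Des

variable {m N k : ℕ} {K : Finset ℕ}

lemma desSet_pad (hkN : k ≤ N) (σ : Equiv.Perm (Fin (m + k))) :
    DesSet (pad hkN σ) = DesSet σ := by
  ext t
  rw [mem_desSet_iff, mem_desSet_iff]
  constructor
  · rintro ⟨h1, h2, hlt⟩
    have hlt' : (pad hkN σ ⟨t, h2⟩ : ℕ) < (pad hkN σ ⟨t - 1, by omega⟩ : ℕ) := hlt
    rcases Nat.lt_or_ge t (m + k) with hc | hc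
    · refine ⟨h1, hc, ?_⟩
      have e1 := pad_apply_lt hkN σ ⟨t, h2⟩ hc
      have e2 := pad_apply_lt hkN σ ⟨t - 1, by omega⟩ (by simp; omega)
      simp only [Fin.lt_def]
      rw [e1, e2] at hlt'
      exact hlt'
    · exfalso
      have e1 : (pad hkN σ ⟨t, h2⟩ : ℕ) = t := by
        rw [pad_apply_ge hkN σ _ (by simpa using hc)]
      rcases Nat.lt_or_ge (t - 1) (m + k) with hd | hd
      · have e2 := pad_apply_lt hkN σ ⟨t - 1, by omega⟩ (by simpa using hd)
        have := (σ ⟨(t : ℕ) - 1, by simpa using hd⟩).isLt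
        omega
      · have e2 : (pad hkN σ ⟨t - 1, by omega⟩ : ℕ) = t - 1 := by
          rw [pad_apply_ge hkN σ _ (by simpa using hd)]
        omega
  · rintro ⟨h1, h2, hlt⟩
    have h2' : t < m + N := by omega
    refine ⟨h1, h2', ?_⟩
    have e1 := pad_apply_lt hkN σ ⟨t, h2'⟩ (by simpa using h2)
    have e2 := pad_apply_lt hkN σ ⟨t - 1, by omega⟩ (by simp; omega)
    simp only [Fin.lt_def]
    rw [e1, e2]
    exact hlt

variable (hsub : K ⊆ range N) (hcard : K.card = k)

set_option maxHeartbeats 1000000 in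
lemma desSet_mul (hkN : k ≤ N) (hk1 : 1 ≤ k) (σ : Equiv.Perm (Fin (m + k)))
    (hC : ∀ x : Fin (m + k), m ≤ (σ x : ℕ) → (x : ℕ) < m) :
    DesSet (fPerm m hsub hcard * pad hkN σ) = DesSet (pad hkN σ) := by
  have hτlt : ∀ (t : ℕ) (h : t < m + N), t < m + k → (pad hkN σ ⟨t, h⟩ : ℕ) < m + k := by
    intro t h ht
    exact (pad_lt_iff hkN σ ⟨t, h⟩).mpr (by simpa using ht)
  ext t
  rw [mem_desSet_iff, mem_desSet_iff]
  have hiff : ∀ (h1 : 1 ≤ t) (h2 : t < m + N),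
      (((fPerm m hsub hcard * pad hkN σ) ⟨t, h2⟩ : ℕ)
        < ((fPerm m hsub hcard * pad hkN σ) ⟨t - 1, by omega⟩ : ℕ))
      ↔ ((pad hkN σ ⟨t, h2⟩ : ℕ) < (pad hkN σ ⟨t - 1, by omega⟩ : ℕ)) := by
    intro h1 h2
    set a := pad hkN σ ⟨t - 1, by omega⟩ with ha
    set b := pad hkN σ ⟨t, h2⟩ with hb
    have hab : a ≠ b := fun h => by
      have := (pad hkN σ).injective (ha ▸ hb ▸ h.symm)
      simp only [Fin.mk.injEq] at this
      omega
    have hmul1 : ((fPerm m hsub hcard * pad hkN σ) ⟨t, h2⟩ : ℕ)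
        = (Ffun m hsub hcard b : ℕ) := rfl
    have hmul2 : ((fPerm m hsub hcard * pad hkN σ) ⟨t - 1, by omega⟩ : ℕ)
        = (Ffun m hsub hcard a : ℕ) := rfl
    rw [hmul1, hmul2]
    rcases Nat.lt_or_ge t (m + k) with hc | hc
    · -- both positions < m+k, so both values < m+k : F monotone both ways
      have hvb : (b : ℕ) < m + k := hτlt t h2 hc
      have hva : (a : ℕ) < m + k := hτlt (t - 1) (by omega) (by omega)
      constructor
      · intro hlt
        by_contra hcon
        push_neg at hcon
        have hne : (b : ℕ) ≠ (a : ℕ) := fun h => hab (Fin.ext h.symm)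
        have : (a : ℕ) < (b : ℕ) := by omega
        have := Fmono hsub hcard this (by omega)
        omega
      · intro hlt
        exact Fmono hsub hcard hlt (by omega)
    · -- t ≥ m + k
      rcases Nat.eq_or_lt_of_le hc with hc' | hc'
      · -- t = m + k : value b is fixed = m+k ; a = σ (m+k-1) < m (by hC)
        have hvb : (b : ℕ) = t := by
          rw [hb, pad_apply_ge hkN σ _ (by simp; omega)]
        have hva : (a : ℕ) < m := by
          have e : (a : ℕ) = (σ ⟨t - 1, by omega⟩ : ℕ) := by
            rw [ha, pad_apply_lt hkN σ ⟨t - 1, by omega⟩ (by simp; omega)]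
          by_contra hcon
          push_neg at hcon
          have h5 := hC ⟨t - 1, by omega⟩ (by omega)
          simp only [Fin.val_mk] at h5
          omega
        have hFa : (Ffun m hsub hcard a : ℕ) = (a : ℕ) := by
          rw [FL1 hsub hcard hva]
        have hFb : m ≤ (Ffun m hsub hcard b : ℕ) := Fge hsub hcard (by omega)
        constructor
        · intro hlt; omega
        · intro hlt; omega
      · -- t > m + k : positions t-1, t ≥ m+k fixed by pad; F monotone
        have hvb : (b : ℕ) = t := by
          rw [hb, pad_apply_ge hkN σ _ (by simp; omega)]
        have hva : (a : ℕ) = t - 1 := by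
          rw [ha, pad_apply_ge hkN σ _ (by simp; omega)]
        have : (Ffun m hsub hcard a : ℕ) < (Ffun m hsub hcard b : ℕ) :=
          Fmono hsub hcard (by omega) (by omega)
        constructor
        · intro hlt; omega
        · intro hlt; omega
  constructor
  · rintro ⟨h1, h2, hlt⟩
    exact ⟨h1, h2, (hiff h1 h2).mp hlt⟩
  · rintro ⟨h1, h2, hlt⟩
    exact ⟨h1, h2, (hiff h1 h2).mpr hlt⟩

end Des

section InvMul

variable {m N k : ℕ} {K : Finset ℕ}

lemma emb_surj {l a : ℕ} (s : Finset ℕ) (h : s.card = l) (ha : a ∈ s) :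
    ∃ i : Fin l, s.orderEmbOfFin h i = a := by
  have : a ∈ Set.range (s.orderEmbOfFin h) := by
    rw [Finset.range_orderEmbOfFin]
    exact ha
  exact this

variable (hsub : K ⊆ range N) (hcard : K.card = k)

set_option maxHeartbeats 1600000 in
lemma invNum_mul (hkN : k ≤ N) (σ : Equiv.Perm (Fin (m + k))) :
    invNum (fPerm m hsub hcard * pad hkN σ)
      = invNum (pad hkN σ)
        + ((K ×ˢ (range N \ K)).filter fun p : ℕ × ℕ => p.2 < p.1).card := by
  set τ := pad hkN σ with hτ
  have hτval : ∀ x : Fin (m + N),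
      ((fPerm m hsub hcard * τ) x : ℕ) = (Ffun m hsub hcard (τ x) : ℕ) := fun x => rfl
  have hτlt : ∀ x : Fin (m + N), (τ x : ℕ) < m + k ↔ (x : ℕ) < m + k :=
    fun x => pad_lt_iff hkN σ x
  have hτge : ∀ x : Fin (m + N), m + k ≤ (x : ℕ) → τ x = x :=
    fun x h => pad_apply_ge hkN σ x h
  have hzone : ∀ p : Fin (m + N) × Fin (m + N), p.1 < p.2 →
      (fPerm m hsub hcard * τ) p.2 < (fPerm m hsub hcard * τ) p.1 →
      ¬((τ p.2 : ℕ) < (τ p.1 : ℕ)) →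
      m ≤ (τ p.1 : ℕ) ∧ (τ p.1 : ℕ) < m + k ∧ m + k ≤ (τ p.2 : ℕ) := by
    intro p h1 h2 hq
    have h2' : ((fPerm m hsub hcard * τ) p.2 : ℕ) < ((fPerm m hsub hcard * τ) p.1 : ℕ) := h2
    have hne : (τ p.1 : ℕ) ≠ (τ p.2 : ℕ) := by
      intro he
      have h3 := τ.injective (Fin.ext he)
      have h1' : (p.1 : ℕ) < (p.2 : ℕ) := h1
      rw [h3] at h1'
      omega
    have hlt : (τ p.1 : ℕ) < (τ p.2 : ℕ) := by omega
    by_contra hc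
    have := Fmono hsub hcard hlt hc
    rw [hτval p.1, hτval p.2] at h2'
    omega
  unfold invNum
  rw [← Finset.card_filter_add_card_filter_not
    (s := Finset.univ.filter fun p : Fin (m + N) × Fin (m + N) =>
      p.1 < p.2 ∧ (fPerm m hsub hcard * τ) p.2 < (fPerm m hsub hcard * τ) p.1)
    (p := fun p : Fin (m + N) × Fin (m + N) => (τ p.2 : ℕ) < (τ p.1 : ℕ))]
  congr 1
  · -- first component equals inversions of τ
    congr 1
    rw [Finset.filter_filter]
    ext p
    simp only [Finset.mem_filter, Finset.mem_univ, true_and]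
    constructor
    · rintro ⟨⟨h1, _⟩, hq⟩
      exact ⟨h1, hq⟩
    · rintro ⟨h1, hq⟩
      refine ⟨⟨h1, ?_⟩, hq⟩
      show ((fPerm m hsub hcard * τ) p.2 : ℕ) < ((fPerm m hsub hcard * τ) p.1 : ℕ)
      rw [hτval p.1, hτval p.2]
      apply Fmono hsub hcard hq
      rintro ⟨hz1, hz2, hz3⟩
      have hp1 : ¬ ((p.1 : ℕ) < m + k) := by
        intro hcc
        have := (hτlt p.1).mpr hcc
        omega
      have h1' : (p.1 : ℕ) < (p.2 : ℕ) := h1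
      have hp2 : τ p.2 = p.2 := hτge p.2 (by omega)
      rw [hp2] at hz2
      omega
  · -- second component: card equals the K×M statistic
    apply Finset.card_bij (i := fun p _ =>
      (((Ffun m hsub hcard (τ p.1) : ℕ) - m), ((Ffun m hsub hcard (τ p.2) : ℕ) - m)))
    · intro p hp
      simp only [Finset.mem_filter, Finset.mem_univ, true_and] at hp
      obtain ⟨⟨h1, h2⟩, hq⟩ := hp
      obtain ⟨hz1, hz2, hz3⟩ := hzone p h1 h2 hq
      have e1 := FL2 hsub hcard hz1 hz2
      have e2 := FL3 hsub hcard (v := τ p.2) hz3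
      simp only [Finset.mem_filter, Finset.mem_product]
      have h2' : ((fPerm m hsub hcard * τ) p.2 : ℕ) < ((fPerm m hsub hcard * τ) p.1 : ℕ) := h2
      rw [hτval p.1, hτval p.2] at h2'
      refine ⟨⟨?_, ?_⟩, by omega⟩
      · have heq : (Ffun m hsub hcard (τ p.1) : ℕ) - m
            = (K.orderEmbOfFin hcard ⟨(τ p.1 : ℕ) - m, by omega⟩ : ℕ) := by omega
        rw [heq]
        exact Finset.orderEmbOfFin_mem K hcard _
      · have heq : (Ffun m hsub hcard (τ p.2) : ℕ) - m
            = ((range N \ K).orderEmbOfFin (Mcard hsub hcard)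
                ⟨(τ p.2 : ℕ) - m - k, by have := (τ p.2).isLt; omega⟩ : ℕ) := by omega
        rw [heq]
        exact Finset.orderEmbOfFin_mem _ (Mcard hsub hcard) _
    · intro p hp p' hp' he
      simp only [Finset.mem_filter, Finset.mem_univ, true_and] at hp hp'
      obtain ⟨⟨h1, h2⟩, hq⟩ := hp
      obtain ⟨⟨h1', h2'⟩, hq'⟩ := hp'
      have hz := hzone p h1 h2 hq
      have hz' := hzone p' h1' h2' hq'
      simp only [Prod.mk.injEq] at he
      have ge1 := Fge hsub hcard (v := τ p.1) (by omega)
      have ge2 := Fge hsub hcard (v := τ p.2) (by omega)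
      have ge1' := Fge hsub hcard (v := τ p'.1) (by omega)
      have ge2' := Fge hsub hcard (v := τ p'.2) (by omega)
      have f1 : Ffun m hsub hcard (τ p.1) = Ffun m hsub hcard (τ p'.1) := Fin.ext (by omega)
      have f2 : Ffun m hsub hcard (τ p.2) = Ffun m hsub hcard (τ p'.2) := Fin.ext (by omega)
      have t1 : τ p.1 = τ p'.1 := Finj hsub hcard f1
      have t2 : τ p.2 = τ p'.2 := Finj hsub hcard f2
      exact Prod.ext (τ.injective t1) (τ.injective t2)
    · intro q hq
      simp only [Finset.mem_filter, Finset.mem_product] at hq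
      obtain ⟨⟨haK, hbM⟩, hba⟩ := hq
      obtain ⟨ia, hia⟩ := emb_surj K hcard haK
      obtain ⟨jb, hjb⟩ := emb_surj (range N \ K) (Mcard hsub hcard) hbM
      have hiak : (ia : ℕ) < k := ia.isLt
      have hjbk : (jb : ℕ) < N - k := jb.isLt
      have hb1 : m + (ia : ℕ) < m + N := by omega
      have hb2 : m + k + (jb : ℕ) < m + N := by omega
      set v1 : Fin (m + N) := ⟨m + (ia : ℕ), hb1⟩ with hv1
      set x2 : Fin (m + N) := ⟨m + k + (jb : ℕ), hb2⟩ with hx2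
      set x1 : Fin (m + N) := τ.symm v1 with hx1
      have vt1 : (τ x1 : ℕ) = m + (ia : ℕ) := by
        rw [hx1, τ.apply_symm_apply, hv1]
      have vt2 : (τ x2 : ℕ) = m + k + (jb : ℕ) := by
        rw [hτge x2 (by rw [hx2]; simp)]
      have eF1 : (Ffun m hsub hcard (τ x1) : ℕ) = m + q.1 := by
        rw [FL2' hsub hcard ia (τ x1) vt1, hia]
      have eF2 : (Ffun m hsub hcard (τ x2) : ℕ) = m + q.2 := by
        rw [FL3' hsub hcard jb (τ x2) vt2, hjb]
      have hx1lt : (x1 : ℕ) < m + k := by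
        rw [← hτlt x1]
        omega
      refine ⟨(x1, x2), ?_, ?_⟩
      · simp only [Finset.mem_filter, Finset.mem_univ, true_and]
        refine ⟨⟨?_, ?_⟩, ?_⟩
        · show (x1 : ℕ) < (x2 : ℕ)
          rw [hx2]
          simp only [Fin.val_mk]
          omega
        · show ((fPerm m hsub hcard * τ) x2 : ℕ) < ((fPerm m hsub hcard * τ) x1 : ℕ)
          rw [hτval x1, hτval x2, eF1, eF2]
          omega
        · omega
      · refine Prod.ext ?_ ?_
        · show (Ffun m hsub hcard (τ x1) : ℕ) - m = q.1
          omega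
        · show (Ffun m hsub hcard (τ x2) : ℕ) - m = q.2
          omega

lemma qStat_eq_compl {N' : ℕ} {K' : Finset ℕ} (hsub' : K' ⊆ range N') :
    qStat K' = ∑ a ∈ K', ((range N' \ K').filter (· < a)).card := by
  unfold qStat
  refine Finset.sum_congr rfl fun a ha => ?_
  have haN : a < N' := Finset.mem_range.mp (hsub' ha)
  have h1 : (range N' \ K').filter (· < a) = (range a).filter (fun u => ¬ u ∈ K') := by
    ext u
    simp only [Finset.mem_filter, Finset.mem_sdiff, Finset.mem_range]
    constructor
    · rintro ⟨⟨hu1, hu2⟩, hu3⟩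
      exact ⟨hu3, hu2⟩
    · rintro ⟨hu1, hu2⟩
      exact ⟨⟨by omega, hu2⟩, hu1⟩
  have h2 : K'.filter (· < a) = (range a).filter (fun u => u ∈ K') := by
    ext u
    simp only [Finset.mem_filter, Finset.mem_range]
    tauto
  rw [h1, h2]
  have h3 := Finset.card_filter_add_card_filter_not (s := range a)
    (p := fun u => u ∈ K')
  rw [Finset.card_range] at h3
  omega

lemma statc_eq_qStat (hs : K ⊆ range N) :
    ((K ×ˢ (range N \ K)).filter fun p : ℕ × ℕ => p.2 < p.1).card = qStat K := by
  rw [qStat_eq_compl hs]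
  rw [Finset.card_eq_sum_card_fiberwise
    (f := fun p : ℕ × ℕ => p.1) (t := K) (fun p hp => by
      simp only [Finset.mem_coe, Finset.mem_filter, Finset.mem_product] at hp
      exact hp.1.1)]
  refine Finset.sum_congr rfl fun a ha => ?_
  apply Finset.card_bij (i := fun p _ => p.2)
  · intro p hp
    simp only [Finset.mem_filter, Finset.mem_product] at hp ⊢
    obtain ⟨⟨⟨_, hpM⟩, hlt⟩, hfst⟩ := hp
    rw [hfst] at hlt
    exact ⟨hpM, hlt⟩
  · intro p hp p' hp' he
    simp only [Finset.mem_filter, Finset.mem_product] at hp hp'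
    exact Prod.ext (hp.2.trans hp'.2.symm) he
  · intro b hb
    simp only [Finset.mem_filter] at hb
    refine ⟨(a, b), ?_, rfl⟩
    simp only [Finset.mem_filter, Finset.mem_product]
    exact ⟨⟨⟨ha, hb.1⟩, hb.2⟩, by trivial⟩

end InvMul

section Recon

lemma card_fin_filter_Ico (a c b : ℕ) (hcb : c ≤ b) :
    (Finset.univ.filter fun i : Fin b => a ≤ (i : ℕ) ∧ (i : ℕ) < c).card = c - a := by
  have key : (Finset.univ.filter fun i : Fin b => a ≤ (i : ℕ) ∧ (i : ℕ) < c).card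
      = (Finset.Ico a c).card := by
    refine Finset.card_nbij (i := fun (i : Fin b) => (i : ℕ)) ?_ ?_ ?_
    · intro x hx
      simp only [Finset.mem_coe, Finset.mem_filter, Finset.mem_univ, true_and] at hx
      simp only [Finset.mem_coe, Finset.mem_Ico]
      exact hx
    · intro x _ y _ h
      exact Fin.ext h
    · intro y hy
      simp only [Finset.coe_Ico, Set.mem_Ico] at hy
      refine ⟨⟨y, by omega⟩, ?_, rfl⟩
      simp only [Finset.coe_filter, Set.mem_setOf_eq, Finset.mem_univ, true_and]
      omega
  rw [key, Nat.card_Ico]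

variable {m N k : ℕ} {S : Finset ℕ}

lemma small_card (π : Equiv.Perm (Fin (m + N))) :
    (Finset.univ.filter fun q : Fin (m + N) => (π q : ℕ) < m).card = m := by
  have key : (Finset.univ.filter fun q : Fin (m + N) => (π q : ℕ) < m).card
      = (Finset.univ.filter fun v : Fin (m + N) => (v : ℕ) < m).card := by
    apply Finset.card_bij (i := fun q _ => π q)
    · intro q hq
      simp only [Finset.mem_filter, Finset.mem_univ, true_and] at hq ⊢
      exact hq
    · intro q _ q' _ h
      exact π.injective h
    · intro v hv
      simp only [Finset.mem_filter, Finset.mem_univ, true_and] at hv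
      refine ⟨π.symm v, ?_, π.apply_symm_apply v⟩
      simp only [Finset.mem_filter, Finset.mem_univ, true_and, π.apply_symm_apply]
      exact hv
  rw [key, card_fin_filter_lt m (m + N) (by omega)]

lemma smallsuf_card (hSm : ∀ s ∈ S, s ≤ m) (π : Equiv.Perm (Fin (m + N)))
    (hD : DesSet π = S)
    (hcnt : (Finset.univ.filter fun i : Fin (m + N) =>
      (i : ℕ) < m ∧ m ≤ (π i : ℕ)).card = k) :
    (Finset.univ.filter fun q : Fin (m + N) => m ≤ (q : ℕ) ∧ (π q : ℕ) < m).card = k := by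
  -- first-block smalls have card m - k, and k ≤ m
  have h1 := Finset.card_filter_add_card_filter_not
    (s := Finset.univ.filter fun i : Fin (m + N) => (i : ℕ) < m)
    (p := fun i => m ≤ (π i : ℕ))
  rw [card_fin_filter_lt m (m + N) (by omega), Finset.filter_filter, Finset.filter_filter] at h1
  rw [hcnt] at h1
  have h2 := Finset.card_filter_add_card_filter_not
    (s := Finset.univ.filter fun q : Fin (m + N) => (π q : ℕ) < m)
    (p := fun q => (q : ℕ) < m)
  rw [small_card π, Finset.filter_filter, Finset.filter_filter] at h2
  have e1 : (Finset.univ.filter fun q : Fin (m + N) => (π q : ℕ) < m ∧ (q : ℕ) < m)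
      = Finset.univ.filter fun i : Fin (m + N) => (i : ℕ) < m ∧ ¬ m ≤ (π i : ℕ) := by
    ext q; simp only [Finset.mem_filter, Finset.mem_univ, true_and]; omega
  have e2 : (Finset.univ.filter fun q : Fin (m + N) => (π q : ℕ) < m ∧ ¬ (q : ℕ) < m)
      = Finset.univ.filter fun q : Fin (m + N) => m ≤ (q : ℕ) ∧ (π q : ℕ) < m := by
    ext q; simp only [Finset.mem_filter, Finset.mem_univ, true_and]; omega
  rw [e1, e2] at h2
  omega

lemma count_suffix (hSm : ∀ s ∈ S, s ≤ m) (π : Equiv.Perm (Fin (m + N)))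
    (hD : DesSet π = S)
    (hcnt : (Finset.univ.filter fun i : Fin (m + N) =>
      (i : ℕ) < m ∧ m ≤ (π i : ℕ)).card = k) :
    ∀ q : Fin (m + N), m ≤ (q : ℕ) → ((q : ℕ) < m + k ↔ (π q : ℕ) < m) := by
  have hmono := suffix_mono π hD hSm
  have hss := smallsuf_card hSm π hD hcnt
  intro q hq
  constructor
  · intro hqk
    by_contra hc
    push_neg at hc
    -- every small-suffix position is < q
    have hsub : (Finset.univ.filter fun x : Fin (m + N) => m ≤ (x : ℕ) ∧ (π x : ℕ) < m)
        ⊆ Finset.univ.filter fun x : Fin (m + N) => m ≤ (x : ℕ) ∧ (x : ℕ) < (q : ℕ) := by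
      intro x hx
      simp only [Finset.mem_filter, Finset.mem_univ, true_and] at hx ⊢
      refine ⟨hx.1, ?_⟩
      by_contra hcc
      push_neg at hcc
      rcases Nat.eq_or_lt_of_le hcc with he | hlt
      · have : x = q := Fin.ext he.symm
        rw [this] at hx
        omega
      · have := hmono q x hq (by exact hlt)
        omega
    have := Finset.card_le_card hsub
    rw [hss, card_fin_filter_Ico m (q : ℕ) (m + N) (by omega)] at this
    omega
  · intro hπq
    by_contra hc
    push_neg at hc
    have hsub : (Finset.univ.filter fun x : Fin (m + N) => m ≤ (x : ℕ) ∧ (x : ℕ) < (q : ℕ) + 1)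
        ⊆ Finset.univ.filter fun x : Fin (m + N) => m ≤ (x : ℕ) ∧ (π x : ℕ) < m := by
      intro x hx
      simp only [Finset.mem_filter, Finset.mem_univ, true_and] at hx ⊢
      refine ⟨hx.1, ?_⟩
      rcases Nat.lt_or_ge (x : ℕ) (q : ℕ) with hlt | hge
      · have := hmono x q hx.1 (by exact hlt)
        omega
      · have : x = q := Fin.ext (by omega)
        rw [this]
        exact hπq
    have := Finset.card_le_card hsub
    rw [hss, card_fin_filter_Ico m ((q : ℕ) + 1) (m + N) (by have := q.isLt; omega)] at this
    omega

def KOf (m N : ℕ) (π : Equiv.Perm (Fin (m + N))) : Finset ℕ :=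
  (Finset.univ.filter fun i : Fin (m + N) => (i : ℕ) < m ∧ m ≤ (π i : ℕ)).image
    fun i => (π i : ℕ) - m

lemma KOf_sub (π : Equiv.Perm (Fin (m + N))) : KOf m N π ⊆ range N := by
  intro a ha
  rw [KOf, Finset.mem_image] at ha
  obtain ⟨i, hi, rfl⟩ := ha
  simp only [Finset.mem_filter, Finset.mem_univ, true_and] at hi
  have := (π i).isLt
  rw [Finset.mem_range]
  omega

lemma KOf_card (π : Equiv.Perm (Fin (m + N)))
    (hcnt : (Finset.univ.filter fun i : Fin (m + N) =>
      (i : ℕ) < m ∧ m ≤ (π i : ℕ)).card = k) :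
    (KOf m N π).card = k := by
  rw [KOf, Finset.card_image_of_injOn, hcnt]
  intro i hi j hj he
  simp only [Finset.coe_filter, Set.mem_setOf_eq, Finset.mem_univ, true_and] at hi hj
  have he' : (π i : ℕ) - m = (π j : ℕ) - m := he
  have : (π i : ℕ) = (π j : ℕ) := by omega
  exact π.injective (Fin.ext this)

lemma KOf_not_mem (π : Equiv.Perm (Fin (m + N))) (q : Fin (m + N)) (hq : m ≤ (q : ℕ))
    (hπq : m ≤ (π q : ℕ)) : (π q : ℕ) - m ∉ KOf m N π := by
  intro hc
  rw [KOf, Finset.mem_image] at hc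
  obtain ⟨i, hi, he⟩ := hc
  simp only [Finset.mem_filter, Finset.mem_univ, true_and] at hi
  have : (π i : ℕ) = (π q : ℕ) := by omega
  have := π.injective (Fin.ext this)
  omega

lemma tail_values (hSm : ∀ s ∈ S, s ≤ m) (π : Equiv.Perm (Fin (m + N)))
    (hD : DesSet π = S)
    (hcnt : (Finset.univ.filter fun i : Fin (m + N) =>
      (i : ℕ) < m ∧ m ≤ (π i : ℕ)).card = k) (hkN : k ≤ N) :
    ∀ t : Fin (N - k), ∀ (h : m + k + (t : ℕ) < m + N),
      (π ⟨m + k + (t : ℕ), h⟩ : ℕ)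
        = m + (range N \ KOf m N π).orderEmbOfFin (Mcard (KOf_sub π) (KOf_card π hcnt)) t := by
  have hcs := count_suffix hSm π hD hcnt
  have hmono := suffix_mono π hD hSm
  have hbnd : ∀ t : Fin (N - k), m + k + (t : ℕ) < m + N := by
    intro t; have := t.isLt; omega
  have hval : ∀ t : Fin (N - k), m ≤ (π ⟨m + k + (t : ℕ), hbnd t⟩ : ℕ) := by
    intro t
    have := (hcs ⟨m + k + (t : ℕ), hbnd t⟩ (by simp; omega))
    simp only [Fin.val_mk] at this
    omega
  have huniq := Finset.orderEmbOfFin_unique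
    (s := range N \ KOf m N π) (h := Mcard (KOf_sub π) (KOf_card π hcnt))
    (f := fun t : Fin (N - k) => (π ⟨m + k + (t : ℕ), hbnd t⟩ : ℕ) - m) ?_ ?_
  · intro t h
    have h3 : (π ⟨m + k + (t : ℕ), hbnd t⟩ : ℕ) - m
        = (range N \ KOf m N π).orderEmbOfFin (Mcard (KOf_sub π) (KOf_card π hcnt)) t :=
      congrFun huniq t
    have h2 := hval t
    show (π ⟨m + k + (t : ℕ), hbnd t⟩ : ℕ)
        = m + (range N \ KOf m N π).orderEmbOfFin (Mcard (KOf_sub π) (KOf_card π hcnt)) t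
    omega
  · intro t
    show (π ⟨m + k + (t : ℕ), hbnd t⟩ : ℕ) - m ∈ range N \ KOf m N π
    rw [Finset.mem_sdiff]
    constructor
    · rw [Finset.mem_range]
      have := (π ⟨m + k + (t : ℕ), hbnd t⟩).isLt
      have h2 := hval t
      omega
    · exact KOf_not_mem π _ (by simp; omega) (hval t)
  · intro t t' hlt
    show (π ⟨m + k + (t : ℕ), hbnd t⟩ : ℕ) - m < (π ⟨m + k + (t' : ℕ), hbnd t'⟩ : ℕ) - m
    have h1 := hval t
    have h2 := hval t'
    have := hmono ⟨m + k + (t : ℕ), hbnd t⟩ ⟨m + k + (t' : ℕ), hbnd t'⟩ (by simp; omega)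
      (by simp only [Fin.lt_def, Fin.val_mk]; have : (t : ℕ) < (t' : ℕ) := hlt; omega)
    simp only [Fin.lt_def] at this
    omega

end Recon

section Recon2

variable {m N k : ℕ} {S : Finset ℕ}

lemma astar_to_cmine (σ : Equiv.Perm (Fin (m + k)))
    (hA : ∀ v ∈ Finset.Icc (m + 1) (m + k),
      ∃ i : Fin (m + k), (i : ℕ) < m ∧ (σ i : ℕ) + 1 = v) :
    ∀ x : Fin (m + k), m ≤ (σ x : ℕ) → (x : ℕ) < m := by
  intro x hx
  have hσlt := (σ x).isLt
  have hv : (σ x : ℕ) + 1 ∈ Finset.Icc (m + 1) (m + k) := by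
    rw [Finset.mem_Icc]
    omega
  obtain ⟨i, hi, he⟩ := hA _ hv
  have h2 : σ i = σ x := Fin.ext (by omega)
  have h3 := σ.injective h2
  have h4 : (i : ℕ) = (x : ℕ) := by rw [h3]
  omega

lemma cmine_to_astar (σ : Equiv.Perm (Fin (m + k)))
    (hC : ∀ x : Fin (m + k), m ≤ (σ x : ℕ) → (x : ℕ) < m) :
    ∀ v ∈ Finset.Icc (m + 1) (m + k),
      ∃ i : Fin (m + k), (i : ℕ) < m ∧ (σ i : ℕ) + 1 = v := by
  intro v hv
  rw [Finset.mem_Icc] at hv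
  refine ⟨σ.symm ⟨v - 1, by omega⟩, ?_, ?_⟩
  · apply hC
    rw [σ.apply_symm_apply]
    simp only [Fin.val_mk]
    omega
  · rw [σ.apply_symm_apply]
    simp only [Fin.val_mk]
    omega

lemma reconstruct (hSm : ∀ s ∈ S, s ≤ m) (hkN : k ≤ N)
    (π : Equiv.Perm (Fin (m + N))) (hD : DesSet π = S)
    (hcnt : (Finset.univ.filter fun i : Fin (m + N) =>
      (i : ℕ) < m ∧ m ≤ (π i : ℕ)).card = k) :
    ∃ σ : Equiv.Perm (Fin (m + k)),
      (∀ x : Fin (m + k), m ≤ (σ x : ℕ) → (x : ℕ) < m) ∧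
      fPerm m (KOf_sub π) (KOf_card π hcnt) * pad hkN σ = π := by
  have hcs := count_suffix hSm π hD hcnt
  set f := fPerm m (KOf_sub π) (KOf_card π hcnt) with hf
  set ρ := f⁻¹ * π with hρ
  have hρval : ∀ x : Fin (m + N), ρ x = f⁻¹ (π x) := fun x => rfl
  have hfix : ∀ i : Fin (m + N), m + k ≤ (i : ℕ) → ρ i = i := by
    intro i hi
    have hb : m + k + ((i : ℕ) - m - k) < m + N := by have := i.isLt; omega
    have htv := tail_values hSm π hD hcnt hkN ⟨(i : ℕ) - m - k, by have := i.isLt; omega⟩ hb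
    have hie : (⟨m + k + ((i : ℕ) - m - k), hb⟩ : Fin (m + N)) = i := Fin.ext (by simp; omega)
    rw [hie] at htv
    have hF := FL3' (KOf_sub π) (KOf_card π hcnt)
      ⟨(i : ℕ) - m - k, by have := i.isLt; omega⟩ i (by simp; omega)
    have hπi : π i = Ffun m (KOf_sub π) (KOf_card π hcnt) i := Fin.ext (by rw [htv, hF])
    rw [hρval i, hπi]
    exact (fPerm m (KOf_sub π) (KOf_card π hcnt)).symm_apply_apply i
  have hp : ∀ x : Fin (m + N), ((x : ℕ) < m + k ↔ ((ρ x : Fin (m + N)) : ℕ) < m + k) := by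
    intro x
    constructor
    · intro hx
      by_contra hc
      push_neg at hc
      have h1 := hfix (ρ x) hc
      have h2 := ρ.injective h1
      have h3 : ((ρ x : Fin (m + N)) : ℕ) = (x : ℕ) := by rw [h2]
      omega
    · intro hx
      by_contra hc
      push_neg at hc
      have h1 := hfix x hc
      rw [h1] at hx
      omega
  refine ⟨(Equiv.permCongr (eEquiv m k N hkN)).symm (ρ.subtypePerm fun x => (hp x).symm), ?_, ?_⟩
  · -- values ≥ m occur at positions < m
    intro x hx
    by_contra hc
    push_neg at hc
    have hxlt := x.isLt
    have hb : (x : ℕ) < m + N := by omega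
    have hσval : (((Equiv.permCongr (eEquiv m k N hkN)).symm (ρ.subtypePerm fun x => (hp x).symm)) x : ℕ)
        = ((ρ ⟨(x : ℕ), hb⟩ : Fin (m + N)) : ℕ) := rfl
    have hπlt : (π ⟨(x : ℕ), hb⟩ : ℕ) < m := by
      have := (hcs ⟨(x : ℕ), hb⟩ (by simpa using hc)).mp (by simpa using hxlt)
      exact this
    have hfq : Ffun m (KOf_sub π) (KOf_card π hcnt) (π ⟨(x : ℕ), hb⟩) = π ⟨(x : ℕ), hb⟩ :=
      FL1 (KOf_sub π) (KOf_card π hcnt) hπlt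
    have hinv : f⁻¹ (π ⟨(x : ℕ), hb⟩) = π ⟨(x : ℕ), hb⟩ := by
      conv_lhs => rw [← hfq]
      exact (fPerm m (KOf_sub π) (KOf_card π hcnt)).symm_apply_apply _
    rw [hσval, hρval, hinv] at hx
    omega
  · -- f * pad σ = π
    have hpad : pad hkN ((Equiv.permCongr (eEquiv m k N hkN)).symm (ρ.subtypePerm fun x => (hp x).symm)) = ρ := by
      apply Equiv.ext
      intro x
      rcases Nat.lt_or_ge (x : ℕ) (m + k) with hx | hx
      · apply Fin.ext
        rw [pad_apply_lt hkN _ x hx]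
        rfl
      · rw [pad_apply_ge hkN _ x hx, hfix x hx]
    rw [hpad, hρ]
    exact mul_inv_cancel_left f π

end Recon2

section Fwd

variable {m N k : ℕ} {K : Finset ℕ}
variable (hsub : K ⊆ range N) (hcard : K.card = k)

set_option maxHeartbeats 1600000 in
lemma count_psi (hkN : k ≤ N) (σ : Equiv.Perm (Fin (m + k)))
    (hC : ∀ x : Fin (m + k), m ≤ (σ x : ℕ) → (x : ℕ) < m) :
    (Finset.univ.filter fun i : Fin (m + N) =>
      (i : ℕ) < m ∧ m ≤ ((fPerm m hsub hcard * pad hkN σ) i : ℕ)).card = k := by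
  have hval : ∀ i : Fin (m + N), ((fPerm m hsub hcard * pad hkN σ) i : ℕ)
      = (Ffun m hsub hcard (pad hkN σ i) : ℕ) := fun _ => rfl
  have key : (Finset.univ.filter fun i : Fin (m + N) =>
      (i : ℕ) < m ∧ m ≤ ((fPerm m hsub hcard * pad hkN σ) i : ℕ)).card
      = (Finset.univ.filter fun v : Fin (m + k) => m ≤ (v : ℕ)).card := by
    refine Finset.card_bij (i := fun i hi => σ ⟨(i : ℕ), by
      simp only [Finset.mem_filter, Finset.mem_univ, true_and] at hi
      omega⟩) ?_ ?_ ?_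
    · intro i hi
      simp only [Finset.mem_filter, Finset.mem_univ, true_and] at hi ⊢
      obtain ⟨h1, h2⟩ := hi
      have hτ : (pad hkN σ i : ℕ) = (σ ⟨(i : ℕ), by omega⟩ : ℕ) :=
        pad_apply_lt hkN σ i (by omega)
      rw [hval i] at h2
      by_contra hcc
      push_neg at hcc
      have hsm : (pad hkN σ i : ℕ) < m := by rw [hτ]; exact hcc
      have := FL1 hsub hcard hsm
      have h4 : (Ffun m hsub hcard (pad hkN σ i) : ℕ) = (pad hkN σ i : ℕ) := by rw [this]
      omega
    · intro i hi i' hi' he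
      have := σ.injective he
      simp only [Fin.mk.injEq] at this
      exact Fin.ext this
    · intro v hv
      simp only [Finset.mem_filter, Finset.mem_univ, true_and] at hv
      have hx := hC (σ.symm v) (by rw [σ.apply_symm_apply]; exact hv)
      have hb : ((σ.symm v : Fin (m + k)) : ℕ) < m + N := by omega
      refine ⟨⟨(σ.symm v : ℕ), hb⟩, ?_, ?_⟩
      · simp only [Finset.mem_filter, Finset.mem_univ, true_and]
        refine ⟨by simpa using hx, ?_⟩
        have hτ : (pad hkN σ ⟨(σ.symm v : ℕ), hb⟩ : ℕ) = (v : ℕ) := by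
          rw [pad_apply_lt hkN σ _ (by simp only [Fin.val_mk]; omega)]
          show (σ (σ.symm v) : ℕ) = (v : ℕ)
          rw [σ.apply_symm_apply]
        rw [hval _]
        have := Fge hsub hcard (v := pad hkN σ ⟨(σ.symm v : ℕ), hb⟩) (by omega)
        exact this
      · show σ (σ.symm v) = v
        exact σ.apply_symm_apply v
  rw [key, card_fin_filter_ge m (m + k) (by omega)]
  omega

set_option maxHeartbeats 1600000 in
lemma KOf_psi (hkN : k ≤ N) (σ : Equiv.Perm (Fin (m + k)))
    (hC : ∀ x : Fin (m + k), m ≤ (σ x : ℕ) → (x : ℕ) < m) :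
    KOf m N (fPerm m hsub hcard * pad hkN σ) = K := by
  have hval : ∀ i : Fin (m + N), ((fPerm m hsub hcard * pad hkN σ) i : ℕ)
      = (Ffun m hsub hcard (pad hkN σ i) : ℕ) := fun _ => rfl
  ext a
  rw [KOf, Finset.mem_image]
  constructor
  · rintro ⟨i, hi, rfl⟩
    simp only [Finset.mem_filter, Finset.mem_univ, true_and] at hi
    obtain ⟨h1, h2⟩ := hi
    have hτ : (pad hkN σ i : ℕ) = (σ ⟨(i : ℕ), by omega⟩ : ℕ) := pad_apply_lt hkN σ i (by omega)
    have hτlt : (pad hkN σ i : ℕ) < m + k := by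
      rw [hτ]
      exact (σ _).isLt
    have hτge : m ≤ (pad hkN σ i : ℕ) := by
      by_contra hcc
      push_neg at hcc
      have h3 := FL1 hsub hcard (v := pad hkN σ i) hcc
      have h4 : (Ffun m hsub hcard (pad hkN σ i) : ℕ) = (pad hkN σ i : ℕ) := by rw [h3]
      rw [hval i] at h2
      omega
    have hbnd : (pad hkN σ i : ℕ) - m < k := by omega
    have hF := FL2' hsub hcard ⟨(pad hkN σ i : ℕ) - m, hbnd⟩ (pad hkN σ i)
      (by simp only [Fin.val_mk]; omega)
    show ((fPerm m hsub hcard * pad hkN σ) i : ℕ) - m ∈ K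
    have heq : ((fPerm m hsub hcard * pad hkN σ) i : ℕ) - m
        = (K.orderEmbOfFin hcard ⟨(pad hkN σ i : ℕ) - m, hbnd⟩ : ℕ) := by
      rw [hval i, hF]
      omega
    rw [heq]
    exact Finset.orderEmbOfFin_mem K hcard _
  · intro ha
    obtain ⟨ia, hia⟩ := emb_surj K hcard ha
    have hiak : (ia : ℕ) < k := ia.isLt
    have hw : m + (ia : ℕ) < m + k := by omega
    set w : Fin (m + k) := ⟨m + (ia : ℕ), hw⟩ with hwdef
    have hwv : (w : ℕ) = m + (ia : ℕ) := rfl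
    have hx := hC (σ.symm w) (by rw [σ.apply_symm_apply]; omega)
    have hxN : (σ.symm w : ℕ) < m + N := by omega
    have hτ : (pad hkN σ ⟨(σ.symm w : ℕ), hxN⟩ : ℕ) = m + (ia : ℕ) := by
      rw [pad_apply_lt hkN σ _ (by simp only [Fin.val_mk]; omega)]
      show (σ (σ.symm w) : ℕ) = m + (ia : ℕ)
      rw [σ.apply_symm_apply]
    have hψ : ((fPerm m hsub hcard * pad hkN σ) ⟨(σ.symm w : ℕ), hxN⟩ : ℕ) = m + a := by
      rw [hval _, FL2' hsub hcard ia _ hτ, hia]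
    refine ⟨⟨(σ.symm w : ℕ), hxN⟩, ?_, ?_⟩
    · simp only [Finset.mem_filter, Finset.mem_univ, true_and]
      exact ⟨by simpa using hx, by omega⟩
    · show ((fPerm m hsub hcard * pad hkN σ) ⟨(σ.symm w : ℕ), hxN⟩ : ℕ) - m = a
      omega

end Fwd

section FiberSum

set_option maxHeartbeats 3200000 in
lemma fiber_sum {m N k : ℕ} {S : Finset ℕ} (hSm : ∀ s ∈ S, s ≤ m)
    (hk1 : 1 ≤ k) (hkN : k ≤ N) :
    ∑ π ∈ Finset.univ.filter (fun π : Equiv.Perm (Fin (m + N)) =>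
        DesSet π = S ∧ (Finset.univ.filter fun i : Fin (m + N) =>
          (i : ℕ) < m ∧ m ≤ (π i : ℕ)).card = k), (X : Polynomial ℝ) ^ invNum π
      = (∑ σ ∈ Finset.univ.filter (fun σ : Equiv.Perm (Fin (m + k)) =>
          DesSet σ = S ∧ ∀ v ∈ Finset.Icc (m + 1) (m + k),
            ∃ i : Fin (m + k), (i : ℕ) < m ∧ (σ i : ℕ) + 1 = v),
          (X : Polynomial ℝ) ^ invNum σ) * qG N k := by
  rw [qG, Finset.sum_mul_sum]
  rw [← Finset.sum_product']
  refine (Finset.sum_bij (i := fun p hp =>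
    fPerm m (Finset.mem_powersetCard.mp (Finset.mem_product.mp hp).2).1
      (Finset.mem_powersetCard.mp (Finset.mem_product.mp hp).2).2 * pad hkN p.1)
    ?_ ?_ ?_ ?_).symm
  · -- maps into the fiber
    intro p hp
    have hmem := Finset.mem_product.mp hp
    have hσm := Finset.mem_filter.mp hmem.1
    obtain ⟨hDσ, hAσ⟩ := hσm.2
    have hKm := Finset.mem_powersetCard.mp hmem.2
    have hC := astar_to_cmine p.1 hAσ
    simp only [Finset.mem_filter, Finset.mem_univ, true_and]
    constructor
    · rw [desSet_mul hKm.1 hKm.2 hkN hk1 p.1 hC, desSet_pad]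
      exact hDσ
    · exact count_psi hKm.1 hKm.2 hkN p.1 hC
  · -- injectivity
    rintro ⟨σ1, K1⟩ hp ⟨σ2, K2⟩ hp' he
    have hmem := Finset.mem_product.mp hp
    have hσm := Finset.mem_filter.mp hmem.1
    have hKm := Finset.mem_powersetCard.mp hmem.2
    have hC1 := astar_to_cmine σ1 hσm.2.2
    have hmem' := Finset.mem_product.mp hp'
    have hσm' := Finset.mem_filter.mp hmem'.1
    have hKm' := Finset.mem_powersetCard.mp hmem'.2
    have hC2 := astar_to_cmine σ2 hσm'.2.2
    have hK : K1 = K2 := by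
      have h1 : KOf m N (fPerm m hKm.1 hKm.2 * pad hkN σ1) = K1 :=
        KOf_psi hKm.1 hKm.2 hkN σ1 hC1
      have h2 : KOf m N (fPerm m hKm'.1 hKm'.2 * pad hkN σ2) = K2 :=
        KOf_psi hKm'.1 hKm'.2 hkN σ2 hC2
      rw [← h1, ← h2]
      exact congrArg (KOf m N) he
    subst hK
    have he' : fPerm m hKm.1 hKm.2 * pad hkN σ1 = fPerm m hKm.1 hKm.2 * pad hkN σ2 := he
    have hf := mul_left_cancel he'
    have hσ : σ1 = σ2 := by
      apply Equiv.ext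
      intro x
      have hb : (x : ℕ) < m + N := by have := x.isLt; omega
      have e1 : (pad hkN σ1 ⟨(x : ℕ), hb⟩ : ℕ) = (σ1 x : ℕ) :=
        pad_apply_lt hkN σ1 ⟨(x : ℕ), hb⟩ (by simp only [Fin.val_mk]; exact x.isLt)
      have e2 : (pad hkN σ2 ⟨(x : ℕ), hb⟩ : ℕ) = (σ2 x : ℕ) :=
        pad_apply_lt hkN σ2 ⟨(x : ℕ), hb⟩ (by simp only [Fin.val_mk]; exact x.isLt)
      rw [hf] at e1
      exact Fin.ext (by omega)
    rw [hσ]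
  · -- surjectivity
    intro π hπ
    simp only [Finset.mem_filter, Finset.mem_univ, true_and] at hπ
    obtain ⟨hD, hcnt⟩ := hπ
    obtain ⟨σ, hC, heq⟩ := reconstruct hSm hkN π hD hcnt
    refine ⟨(σ, KOf m N π), ?_, ?_⟩
    · rw [Finset.mem_product]
      constructor
      · simp only [Finset.mem_filter, Finset.mem_univ, true_and]
        constructor
        · have h1 := desSet_mul (KOf_sub π) (KOf_card π hcnt) hkN hk1 σ hC
          rw [heq, desSet_pad] at h1
          rw [← h1]
          exact hD
        · exact cmine_to_astar σ hC
      · rw [Finset.mem_powersetCard]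
        exact ⟨KOf_sub π, KOf_card π hcnt⟩
    · exact heq
  · -- values
    intro p hp
    have hmem := Finset.mem_product.mp hp
    have hσm := Finset.mem_filter.mp hmem.1
    have hKm := Finset.mem_powersetCard.mp hmem.2
    rw [invNum_mul hKm.1 hKm.2 hkN p.1, invNum_pad, statc_eq_qStat hKm.1, pow_add]

end FiberSum

section Final

lemma fiber0_empty {m N : ℕ} {S : Finset ℕ} (hmS : m ∈ S) (hN1 : 1 ≤ N) :
    Finset.univ.filter (fun π : Equiv.Perm (Fin (m + N)) =>
      DesSet π = S ∧ (Finset.univ.filter fun i : Fin (m + N) =>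
        (i : ℕ) < m ∧ m ≤ (π i : ℕ)).card = 0) = ∅ := by
  rw [Finset.eq_empty_iff_forall_notMem]
  intro π hπ
  simp only [Finset.mem_filter, Finset.mem_univ, true_and] at hπ
  obtain ⟨hD, hcnt⟩ := hπ
  rw [Finset.card_eq_zero, Finset.filter_eq_empty_iff] at hcnt
  have hsmall : ∀ i : Fin (m + N), (i : ℕ) < m → (π i : ℕ) < m := by
    intro i hi
    by_contra hc
    push_neg at hc
    exact hcnt (Finset.mem_univ i) ⟨hi, hc⟩
  have hdes : m ∈ DesSet π := by rw [hD]; exact hmS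
  rw [mem_desSet_iff] at hdes
  obtain ⟨h1, h2, hlt⟩ := hdes
  have hlt' : (π ⟨m, h2⟩ : ℕ) < (π ⟨m - 1, by omega⟩ : ℕ) := hlt
  have hm1' : (π ⟨m - 1, by omega⟩ : ℕ) < m := hsmall _ (by simp only [Fin.val_mk]; omega)
  have hmlt : (π ⟨m, h2⟩ : ℕ) < m := by omega
  have hcard := Finset.card_le_card_of_injOn (f := fun i => π i)
    (s := Finset.univ.filter fun i : Fin (m + N) => (i : ℕ) < m + 1)
    (t := Finset.univ.filter fun v : Fin (m + N) => (v : ℕ) < m)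
    (by
      intro i hi
      simp only [Finset.mem_coe, Finset.mem_filter, Finset.mem_univ, true_and] at hi ⊢
      rcases Nat.lt_or_ge (i : ℕ) m with h | h
      · exact hsmall i h
      · have : i = ⟨m, h2⟩ := Fin.ext (by simp only [Fin.val_mk]; omega)
        rw [this]
        exact hmlt)
    (fun i _ j _ he => π.injective he)
  rw [card_fin_filter_lt (m + 1) (m + N) (by omega), card_fin_filter_lt m (m + N) (by omega)]
    at hcard
  omega

lemma fiber_big_empty {m N k : ℕ} {S : Finset ℕ} (hNk : N < k) :
    Finset.univ.filter (fun π : Equiv.Perm (Fin (m + N)) =>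
      DesSet π = S ∧ (Finset.univ.filter fun i : Fin (m + N) =>
        (i : ℕ) < m ∧ m ≤ (π i : ℕ)).card = k) = ∅ := by
  rw [Finset.eq_empty_iff_forall_notMem]
  intro π hπ
  simp only [Finset.mem_filter, Finset.mem_univ, true_and] at hπ
  obtain ⟨hD, hcnt⟩ := hπ
  have hcard := Finset.card_le_card_of_injOn (f := fun i => π i)
    (s := Finset.univ.filter fun i : Fin (m + N) => (i : ℕ) < m ∧ m ≤ (π i : ℕ))
    (t := Finset.univ.filter fun v : Fin (m + N) => m ≤ (v : ℕ))
    (by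
      intro i hi
      simp only [Finset.mem_coe, Finset.mem_filter, Finset.mem_univ, true_and] at hi ⊢
      exact hi.2)
    (fun i _ j _ he => π.injective he)
  rw [hcnt, card_fin_filter_ge m (m + N) (by omega)] at hcard
  omega

lemma qNum_degree (j : ℕ) : (qNum (j + 1)).degree = j := by
  have h : qNum (j + 1) = X ^ j + ∑ i ∈ range j, X ^ i := by
    rw [qNum, Finset.sum_range_succ]; ring
  rw [h]
  rw [Polynomial.degree_add_eq_left_of_degree_lt, Polynomial.degree_X_pow]
  rw [Polynomial.degree_X_pow]
  refine lt_of_le_of_lt (Polynomial.degree_sum_le _ _) ?_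
  rw [Finset.sup_lt_iff (by exact WithBot.bot_lt_coe j)]
  intro i hi
  simp only [Polynomial.degree_X_pow]
  exact_mod_cast Finset.mem_range.mp hi

lemma qFactorial_natDegree_succ (n : ℕ) :
    (qFactorial (n + 1)).natDegree = (qFactorial n).natDegree + n := by
  rw [qFactorial_succ]
  rw [Polynomial.Monic.natDegree_mul (qFactorial_monic n) (qNum_monic n)]
  congr 1
  have := qNum_degree n
  exact Polynomial.natDegree_eq_of_degree_eq_some this

lemma qFactorial_natDegree_mono : ∀ a b : ℕ, a ≤ b →
    (qFactorial a).natDegree ≤ (qFactorial b).natDegree := by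
  intro a b hab
  induction b with
  | zero => interval_cases a; exact le_refl _
  | succ b ih =>
    rcases Nat.lt_or_ge a (b + 1) with h | h
    · refine le_trans (ih (by omega)) ?_
      rw [qFactorial_natDegree_succ]
      omega
    · have : a = b + 1 := by omega
      rw [this]

lemma qBinom_big {N k : ℕ} (hN1 : 1 ≤ N) (hNk : N < k) : qBinom N k = 0 := by
  rw [qBinom]
  rw [Polynomial.divByMonic_eq_zero_iff
    ((qFactorial_monic k).mul (qFactorial_monic (N - k)))]
  have h0 : N - k = 0 := by omega
  rw [h0]
  have h1 : qFactorial 0 = 1 := rfl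
  rw [h1, mul_one]
  rw [Polynomial.degree_eq_natDegree (qFactorial_monic N).ne_zero,
    Polynomial.degree_eq_natDegree (qFactorial_monic k).ne_zero]
  have key : (qFactorial N).natDegree < (qFactorial k).natDegree := by
    have h2 : (qFactorial (N + 1)).natDegree = (qFactorial N).natDegree + N :=
      qFactorial_natDegree_succ N
    have h3 := qFactorial_natDegree_mono (N + 1) k (by omega)
    omega
  exact_mod_cast key

end Final

/-- the q-descent polynomial in the basis of q-binomial coefficients
`[n-m choose k]_q`:  `D_S(n,q) = Σ_{k=0}^m a_k(S;q) [n-m choose k]_q`. -/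
theorem stmt2 (S : Finset ℕ) (hS : S.Nonempty) (hpos : ∀ s ∈ S, 0 < s)
    (m : ℕ) (hm : m = S.max' hS)
    (a : ℕ → Polynomial ℝ) (ha0 : a 0 = 0)
    (ha : ∀ j, 1 ≤ j → j ≤ m →
      a j = ∑ π ∈ Finset.univ.filter (fun π : Equiv.Perm (Fin (m + j)) =>
          DesSet π = S ∧ ∀ v ∈ Finset.Icc (m + 1) (m + j),
            ∃ i : Fin (m + j), (i : ℕ) < m ∧ (π i : ℕ) + 1 = v),
        X ^ invNum π)
    (n : ℕ) (hn : m + 1 ≤ n) :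
    Dpoly S n = ∑ k ∈ Finset.range (m + 1), a k * qBinom (n - m) k := by
  have hmS : m ∈ S := by rw [hm]; exact S.max'_mem hS
  have hm1 : 1 ≤ m := hpos m hmS
  have hSm : ∀ s ∈ S, s ≤ m := by intro s hs; rw [hm]; exact S.le_max' s hs
  obtain ⟨N, rfl⟩ : ∃ N, n = m + N := ⟨n - m, by omega⟩
  have hN1 : 1 ≤ N := by omega
  rw [Dpoly]
  rw [← Finset.sum_fiberwise_of_maps_to (g := fun π : Equiv.Perm (Fin (m + N)) =>
      (Finset.univ.filter fun i : Fin (m + N) => (i : ℕ) < m ∧ m ≤ (π i : ℕ)).card)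
      (t := Finset.range (m + 1))
      (fun π _ => by
        rw [Finset.mem_range]
        show (Finset.univ.filter fun i : Fin (m + N) =>
          (i : ℕ) < m ∧ m ≤ (π i : ℕ)).card < m + 1
        have hsub : (Finset.univ.filter fun i : Fin (m + N) =>
            (i : ℕ) < m ∧ m ≤ (π i : ℕ))
            ⊆ Finset.univ.filter fun i : Fin (m + N) => (i : ℕ) < m := by
          intro i hi
          simp only [Finset.mem_filter, Finset.mem_univ, true_and] at hi ⊢
          exact hi.1
        have hle := Finset.card_le_card hsub
        rw [card_fin_filter_lt m (m + N) (by omega)] at hle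
        omega)
      (fun π => (X : Polynomial ℝ) ^ invNum π)]
  refine Finset.sum_congr rfl fun k hk => ?_
  rw [Finset.mem_range] at hk
  rw [Finset.filter_filter]
  have hNm : m + N - m = N := by omega
  rw [hNm]
  rcases Nat.eq_zero_or_pos k with rfl | hk1
  · rw [fiber0_empty hmS hN1, Finset.sum_empty, ha0, zero_mul]
  · rcases le_or_gt k N with hkN | hkN
    · rw [fiber_sum hSm hk1 hkN, ha k hk1 (by omega), qBinom_eq_qG N k hkN]
    · rw [fiber_big_empty hkN, Finset.sum_empty, qBinom_big hN1 hkN, mul_zero]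


end
end

section
/- Let S ⊂ Z_{>0} be a nonempty finite set of positive integers with m = max(S). For 1 ≤ k ≤ m let b_k(S;q) = Σ q^{ℓ(π)}, the sum being over all π ∈ A(S; m+1) with π(m+1) = k, and set b_0(S;q) = 0. Then the sequence (b_k(S;q))_{k=0,...,m} is strongly q-log concave. -/
open Polynomial Finset

noncomputable section

-- insertion of value t at the last position
def insPerm {M : ℕ} (σ : Equiv.Perm (Fin (M+1))) (t : Fin (M+2)) : Equiv.Perm (Fin (M+2)) :=
  (finSuccEquiv' (Fin.last (M+1))).trans ((Equiv.optionCongr σ).trans (finSuccEquiv' t).symm)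

def delPerm {M : ℕ} (τ : Equiv.Perm (Fin (M+2))) : Equiv.Perm (Fin (M+1)) :=
  Equiv.removeNone ((finSuccEquiv' (Fin.last (M+1))).symm.trans
    (τ.trans (finSuccEquiv' (τ (Fin.last (M+1))))))

lemma insPerm_last {M : ℕ} (σ : Equiv.Perm (Fin (M+1))) (t : Fin (M+2)) :
    insPerm σ t (Fin.last (M+1)) = t := by
  simp [insPerm, finSuccEquiv'_at]

lemma insPerm_castSucc {M : ℕ} (σ : Equiv.Perm (Fin (M+1))) (t : Fin (M+2)) (q : Fin (M+1)) :
    insPerm σ t (Fin.castSucc q) = t.succAbove (σ q) := by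
  simp [insPerm, finSuccEquiv'_last_apply_castSucc, finSuccEquiv'_symm_some]

lemma optionCongr_removeNone {α β : Type*} (e : Option α ≃ Option β) (h : e none = none) :
    Equiv.optionCongr (Equiv.removeNone e) = e := by
  refine Equiv.ext fun x => ?_
  cases x with
  | none => simp [h]
  | some a =>
      have h' : ∃ x', e (some a) = some x' := by
        rcases Option.eq_none_or_eq_some (e (some a)) with h2 | h2
        · exact absurd (e.injective (h2.trans h.symm)) (by simp)
        · exact ⟨h2.choose, h2.choose_spec⟩
      simp only [Equiv.optionCongr_apply, Option.map_some]
      exact Equiv.removeNone_some e h'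

lemma delPerm_insPerm {M : ℕ} (σ : Equiv.Perm (Fin (M+1))) (t : Fin (M+2)) :
    delPerm (insPerm σ t) = σ := by
  have hlast : insPerm σ t (Fin.last (M+1)) = t := insPerm_last σ t
  unfold delPerm
  rw [hlast]
  have : (finSuccEquiv' (Fin.last (M+1))).symm.trans ((insPerm σ t).trans (finSuccEquiv' t))
      = Equiv.optionCongr σ := by
    unfold insPerm
    ext x
    simp
  rw [this, Equiv.removeNone_optionCongr]

lemma insPerm_delPerm {M : ℕ} (τ : Equiv.Perm (Fin (M+2))) :
    insPerm (delPerm τ) (τ (Fin.last (M+1))) = τ := by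
  set t := τ (Fin.last (M+1)) with ht
  set χ := (finSuccEquiv' (Fin.last (M+1))).symm.trans (τ.trans (finSuccEquiv' t)) with hχ
  have hnone : χ none = none := by
    simp [hχ, ht, finSuccEquiv'_symm_none, finSuccEquiv'_at]
  have h1 : Equiv.optionCongr (delPerm τ) = χ := optionCongr_removeNone χ hnone
  unfold insPerm
  rw [h1]
  ext p
  simp [hχ]

lemma mem_DesSet_iff {n : ℕ} (π : Equiv.Perm (Fin n)) (k : ℕ) :
    k ∈ DesSet π ↔ ∃ a b : Fin n, (a : ℕ) + 1 = k ∧ (b : ℕ) = k ∧ π b < π a := by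
  simp only [DesSet, Finset.mem_image, Finset.mem_filter, Finset.mem_univ, true_and]
  constructor
  · rintro ⟨a, ⟨b, hab, hlt⟩, hak⟩
    exact ⟨a, b, hak, by omega, hlt⟩
  · rintro ⟨a, b, h1, h2, hlt⟩
    exact ⟨a, ⟨b, by omega, hlt⟩, h1⟩

lemma desSet_lt {n : ℕ} (π : Equiv.Perm (Fin n)) {k : ℕ} (hk : k ∈ DesSet π) : 0 < k ∧ k < n := by
  rw [mem_DesSet_iff] at hk
  obtain ⟨a, b, h1, h2, -⟩ := hk
  have := b.isLt
  omega

lemma erase_helper {D' D T : Finset ℕ} {N : ℕ} {P : Prop}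
    (hD : ∀ k ∈ D, k < N)
    (hiff : ∀ k, k ∈ D' ↔ (k ∈ D ∨ (k = N ∧ P))) :
    D' = T ↔ (D = T.erase N ∧ ((N ∈ T) ↔ P)) := by
  constructor
  · rintro rfl
    constructor
    · ext k
      have h1 := hiff k
      have h2 := hD k
      simp only [Finset.mem_erase]
      constructor
      · intro hk
        exact ⟨by have := h2 hk; omega, h1.mpr (Or.inl hk)⟩
      · rintro ⟨hne, hk⟩
        rcases h1.mp hk with h | h
        · exact h
        · exact absurd h.1 hne
    · rw [hiff N]
      have hND : N ∉ D := fun h => lt_irrefl N (hD N h)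
      constructor
      · rintro (h | h)
        · exact absurd h hND
        · exact h.2
      · intro hP; exact Or.inr ⟨rfl, hP⟩
  · rintro ⟨rfl, hNP⟩
    ext k
    rw [hiff k]
    simp only [Finset.mem_erase]
    constructor
    · rintro (⟨hne, hk⟩ | ⟨rfl, hP⟩)
      · exact hk
      · exact hNP.mpr hP
    · intro hk
      by_cases hkN : k = N
      · subst hkN; exact Or.inr ⟨rfl, hNP.mp hk⟩
      · exact Or.inl ⟨hkN, hk⟩

lemma mem_desSet_insPerm {M : ℕ} (σ : Equiv.Perm (Fin (M+1))) (t : Fin (M+2)) (k : ℕ) :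
    k ∈ DesSet (insPerm σ t) ↔
      (k ∈ DesSet σ ∨ (k = M+1 ∧ t ≤ Fin.castSucc (σ (Fin.last M)))) := by
  rw [mem_DesSet_iff, mem_DesSet_iff]
  constructor
  · rintro ⟨a, b, h1, h2, hlt⟩
    by_cases hk : k < M + 1
    · left
      have ha : a = Fin.castSucc ⟨k - 1, lt_of_le_of_lt (Nat.sub_le k 1) hk⟩ := Fin.ext (by simp; omega)
      have hb : b = Fin.castSucc ⟨k, hk⟩ := Fin.ext (by simp; omega)
      have e1 : (insPerm σ t) b = t.succAbove (σ ⟨k, hk⟩) := by rw [hb, insPerm_castSucc]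
      have e2 : (insPerm σ t) a = t.succAbove (σ ⟨k - 1, lt_of_le_of_lt (Nat.sub_le k 1) hk⟩) := by
        rw [ha, insPerm_castSucc]
      rw [e1, e2, Fin.succAbove_lt_succAbove_iff] at hlt
      exact ⟨⟨k - 1, lt_of_le_of_lt (Nat.sub_le k 1) hk⟩, ⟨k, hk⟩, by simp; omega, by simp, hlt⟩
    · right
      have hbM : (b : ℕ) = M + 1 := by have := b.isLt; omega
      have hkM : k = M + 1 := by omega
      have hb : b = Fin.last (M+1) := Fin.ext (by simpa using hbM)
      have ha : a = Fin.castSucc (Fin.last M) := Fin.ext (by simp; omega)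
      have e1 : (insPerm σ t) b = t := by rw [hb, insPerm_last]
      have e2 : (insPerm σ t) a = t.succAbove (σ (Fin.last M)) := by rw [ha, insPerm_castSucc]
      rw [e1, e2, Fin.lt_succAbove_iff_le_castSucc] at hlt
      exact ⟨by omega, hlt⟩
  · rintro (⟨a, b, h1, h2, hlt⟩ | ⟨hkM, hle⟩)
    · refine ⟨Fin.castSucc a, Fin.castSucc b, by simpa using h1, by simpa using h2, ?_⟩
      rw [insPerm_castSucc, insPerm_castSucc, Fin.succAbove_lt_succAbove_iff]
      exact hlt
    · refine ⟨Fin.castSucc (Fin.last M), Fin.last (M+1), by simp; omega, by simp; omega, ?_⟩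
      rw [insPerm_last, insPerm_castSucc, Fin.lt_succAbove_iff_le_castSucc]
      exact hle

lemma desSet_insPerm_eq_iff {M : ℕ} (σ : Equiv.Perm (Fin (M+1))) (t : Fin (M+2)) (T : Finset ℕ) :
    DesSet (insPerm σ t) = T ↔
      (DesSet σ = T.erase (M+1) ∧ ((M+1 ∈ T) ↔ t ≤ Fin.castSucc (σ (Fin.last M)))) :=
  erase_helper (fun k hk => (desSet_lt σ hk).2) (mem_desSet_insPerm σ t)
lemma card_filter_le_val (N tn : ℕ) :
    ((Finset.univ : Finset (Fin N)).filter (fun v : Fin N => tn ≤ (v : ℕ))).card = N - tn := by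
  by_cases h : tn < N
  · have : ((Finset.univ : Finset (Fin N)).filter (fun v : Fin N => tn ≤ (v : ℕ)))
        = Finset.Ici (⟨tn, h⟩ : Fin N) := by
      ext v
      simp [Finset.mem_Ici, Fin.le_def]
    rw [this, Fin.card_Ici]
  · have : ((Finset.univ : Finset (Fin N)).filter (fun v : Fin N => tn ≤ (v : ℕ))) = ∅ := by
      ext v
      simp only [Finset.mem_filter, Finset.mem_univ, true_and, Finset.notMem_empty, iff_false]
      have := v.isLt; omega
    rw [this]
    simp
    omega

lemma card_filter_perm {N : ℕ} (σ : Equiv.Perm (Fin N)) (P : Fin N → Prop) [DecidablePred P] :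
    (Finset.univ.filter (fun v => P (σ v))).card = (Finset.univ.filter P).card := by
  have : (Finset.univ.filter fun v => P (σ v)) = (Finset.univ.filter P).image σ.symm := by
    ext v
    simp only [Finset.mem_filter, Finset.mem_univ, true_and, Finset.mem_image]
    constructor
    · intro h; exact ⟨σ v, h, by simp⟩
    · rintro ⟨w, hw, rfl⟩; simpa using hw
  rw [this, Finset.card_image_of_injective _ (Equiv.injective _)]

lemma invNum_insPerm {M : ℕ} (σ : Equiv.Perm (Fin (M+1))) (t : Fin (M+2)) :
    invNum (insPerm σ t) = invNum σ + (M + 1 - (t : ℕ)) := by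
  classical
  unfold invNum
  rw [← Finset.card_filter_add_card_filter_not
    (p := fun p : Fin (M+2) × Fin (M+2) => p.2 = Fin.last (M+1)), Finset.filter_filter,
    Finset.filter_filter]
  have h1 : (Finset.univ.filter (fun p : Fin (M+2) × Fin (M+2) =>
        (p.1 < p.2 ∧ insPerm σ t p.2 < insPerm σ t p.1) ∧ p.2 = Fin.last (M+1)))
      = (Finset.univ.filter (fun v : Fin (M+1) => (t : ℕ) ≤ ((σ v : Fin (M+1)) : ℕ))).image
          (fun v => (Fin.castSucc v, Fin.last (M+1))) := by
    ext p
    simp only [Finset.mem_filter, Finset.mem_univ, true_and, Finset.mem_image]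
    constructor
    · rintro ⟨⟨hlt, hvlt⟩, hlast⟩
      have hp1 : (p.1 : ℕ) < M + 1 := by
        have h := Fin.lt_def.mp hlt
        have := p.2.isLt
        omega
      refine ⟨⟨(p.1 : ℕ), hp1⟩, ?_, ?_⟩
      · have e2 : insPerm σ t p.1 = t.succAbove (σ ⟨(p.1 : ℕ), hp1⟩) := by
          have h := insPerm_castSucc σ t ⟨(p.1 : ℕ), hp1⟩
          rw [show Fin.castSucc ⟨(p.1 : ℕ), hp1⟩ = p.1 from Fin.ext rfl] at h
          exact h
        have e3 : insPerm σ t p.2 = t := by rw [hlast, insPerm_last]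
        rw [e2, e3, Fin.lt_succAbove_iff_le_castSucc] at hvlt
        simpa [Fin.le_def] using hvlt
      · rw [Prod.ext_iff]
        exact ⟨(Fin.ext rfl).symm, hlast.symm⟩
    · rintro ⟨v, hv, rfl⟩
      refine ⟨⟨?_, ?_⟩, rfl⟩
      · exact Fin.lt_def.mpr (by simpa using v.isLt)
      · rw [insPerm_last, insPerm_castSucc, Fin.lt_succAbove_iff_le_castSucc]
        simpa [Fin.le_def] using hv
  have h2 : (Finset.univ.filter (fun p : Fin (M+2) × Fin (M+2) =>
        (p.1 < p.2 ∧ insPerm σ t p.2 < insPerm σ t p.1) ∧ ¬ p.2 = Fin.last (M+1)))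
      = (Finset.univ.filter (fun p : Fin (M+1) × Fin (M+1) => p.1 < p.2 ∧ σ p.2 < σ p.1)).image
          (fun p => (Fin.castSucc p.1, Fin.castSucc p.2)) := by
    ext p
    simp only [Finset.mem_filter, Finset.mem_univ, true_and, Finset.mem_image]
    constructor
    · rintro ⟨⟨hlt, hvlt⟩, hne⟩
      have hp2 : (p.2 : ℕ) < M + 1 := by
        have h := p.2.isLt
        rcases Nat.lt_or_ge (p.2 : ℕ) (M+1) with h' | h'
        · exact h'
        · exact absurd (Fin.ext (show (p.2 : ℕ) = M + 1 by omega) : p.2 = Fin.last (M+1)) hne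
      have hp1 : (p.1 : ℕ) < M + 1 := by
        have := Fin.lt_def.mp hlt; omega
      refine ⟨(⟨(p.1 : ℕ), hp1⟩, ⟨(p.2 : ℕ), hp2⟩), ⟨?_, ?_⟩, ?_⟩
      · exact Fin.lt_def.mpr (by simpa using Fin.lt_def.mp hlt)
      · have e1 : insPerm σ t p.1 = t.succAbove (σ ⟨(p.1 : ℕ), hp1⟩) := by
          have h := insPerm_castSucc σ t ⟨(p.1 : ℕ), hp1⟩
          rw [show Fin.castSucc ⟨(p.1 : ℕ), hp1⟩ = p.1 from Fin.ext rfl] at h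
          exact h
        have e2 : insPerm σ t p.2 = t.succAbove (σ ⟨(p.2 : ℕ), hp2⟩) := by
          have h := insPerm_castSucc σ t ⟨(p.2 : ℕ), hp2⟩
          rw [show Fin.castSucc ⟨(p.2 : ℕ), hp2⟩ = p.2 from Fin.ext rfl] at h
          exact h
        rw [e1, e2, Fin.succAbove_lt_succAbove_iff] at hvlt
        exact hvlt
      · rw [Prod.ext_iff]
        exact ⟨(Fin.ext rfl).symm, (Fin.ext rfl).symm⟩
    · rintro ⟨q, hq, rfl⟩
      obtain ⟨hlt, hvlt⟩ := hq
      refine ⟨⟨?_, ?_⟩, ?_⟩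
      · exact Fin.lt_def.mpr (by simpa using Fin.lt_def.mp hlt)
      · rw [insPerm_castSucc, insPerm_castSucc, Fin.succAbove_lt_succAbove_iff]
        exact hvlt
      · intro h
        have := congrArg (fun x : Fin (M+2) => (x : ℕ)) h
        simp at this
        have := q.2.isLt
        omega
  rw [h1, h2, Finset.card_image_of_injective, Finset.card_image_of_injective]
  · rw [card_filter_perm σ (fun v => (t : ℕ) ≤ (v : ℕ)), card_filter_le_val]
    omega
  · intro p q h
    rw [Prod.ext_iff] at h ⊢
    exact ⟨Fin.castSucc_injective _ h.1, Fin.castSucc_injective _ h.2⟩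
  · intro p q h
    rw [Prod.ext_iff] at h
    exact Fin.castSucc_injective _ h.1
/-- `cpol T M t` : generating polynomial of permutations of `S_{M+1}` with descent set `T`
and last value `t` (1-indexed). -/
def cpol (T : Finset ℕ) (M : ℕ) (t : ℕ) : Polynomial ℝ :=
  ∑ π ∈ Finset.univ.filter (fun π : Equiv.Perm (Fin (M+1)) =>
      DesSet π = T ∧ (π (Fin.last M) : ℕ) + 1 = t), X ^ invNum π

lemma cpol_coeff_nonneg (T : Finset ℕ) (M t k : ℕ) : 0 ≤ (cpol T M t).coeff k := by
  rw [cpol, Polynomial.finset_sum_coeff]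
  apply Finset.sum_nonneg
  intro π _
  rw [Polynomial.coeff_X_pow]
  split <;> norm_num

lemma del_eq (M : ℕ) (T : Finset ℕ) (t : ℕ) (ht1 : 1 ≤ t) (ht2 : t ≤ M + 2) :
    cpol T (M+1) t = X ^ (M + 2 - t) *
      ∑ s ∈ (if (M+1) ∈ T then Finset.Icc t (M+1) else Finset.Icc 1 (t-1)),
        cpol (T.erase (M+1)) M s := by
  classical
  set tfin : Fin (M+2) := ⟨t-1, by omega⟩ with htfin
  have htv : (tfin : ℕ) + 1 = t := by simp [htfin]; omega
  set B : Finset (Equiv.Perm (Fin (M+1))) := Finset.univ.filter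
    (fun σ => DesSet σ = T.erase (M+1) ∧ ((M+1 ∈ T) ↔ t ≤ (σ (Fin.last M) : ℕ) + 1)) with hB
  -- iff condition versus the Fin inequality
  have hcond : ∀ σ : Equiv.Perm (Fin (M+1)),
      (tfin ≤ Fin.castSucc (σ (Fin.last M))) ↔ t ≤ (σ (Fin.last M) : ℕ) + 1 := by
    intro σ
    have h0 : (tfin : ℕ) = t - 1 := rfl
    rw [Fin.le_def, Fin.coe_castSucc, h0]
    omega
  -- step 1 : fiberwise
  have hfib : ∑ s ∈ (if (M+1) ∈ T then Finset.Icc t (M+1) else Finset.Icc 1 (t-1)),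
      cpol (T.erase (M+1)) M s = ∑ σ ∈ B, X ^ invNum σ := by
    rw [← Finset.sum_fiberwise_of_maps_to (g := fun σ : Equiv.Perm (Fin (M+1)) =>
      (σ (Fin.last M) : ℕ) + 1)
      (t := if (M+1) ∈ T then Finset.Icc t (M+1) else Finset.Icc 1 (t-1)) ?hmap
      (fun σ => (X : Polynomial ℝ) ^ invNum σ)]
    case hmap =>
      intro σ hσ
      rw [hB, Finset.mem_filter] at hσ
      obtain ⟨-, -, hiff⟩ := hσ
      have hle : (σ (Fin.last M) : ℕ) < M + 1 := (σ (Fin.last M)).isLt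
      by_cases hT : (M+1) ∈ T
      · simp only [hT, if_true, Finset.mem_Icc]
        exact ⟨hiff.mp hT, by omega⟩
      · simp only [hT, if_false, Finset.mem_Icc]
        have : ¬ t ≤ (σ (Fin.last M) : ℕ) + 1 := fun h => hT (hiff.mpr h)
        omega
    apply Finset.sum_congr rfl
    intro s hs
    rw [cpol]
    congr 1
    ext σ
    rw [hB]
    simp only [Finset.filter_filter, Finset.mem_filter, Finset.mem_univ, true_and]
    constructor
    · rintro ⟨hd, hv⟩
      refine ⟨⟨hd, ?_⟩, hv⟩
      by_cases hT : (M+1) ∈ T <;> simp only [hT, if_true, if_false, Finset.mem_Icc] at hs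
      · simp only [hT, true_iff]; omega
      · simp only [hT, false_iff]; omega
    · rintro ⟨⟨hd, -⟩, hv⟩
      exact ⟨hd, hv⟩
  rw [hfib, Finset.mul_sum]
  rw [cpol]
  refine Finset.sum_nbij' (i := fun τ => delPerm τ) (j := fun σ => insPerm σ tfin) ?_ ?_ ?_ ?_ ?_
  · -- maps A to B
    intro τ hτ
    rw [Finset.mem_filter] at hτ
    obtain ⟨-, hd, hv⟩ := hτ
    have hτl : τ (Fin.last (M+1)) = tfin := Fin.ext (by simp [htfin]; omega)
    have hins : insPerm (delPerm τ) tfin = τ := by rw [← hτl]; exact insPerm_delPerm τ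
    rw [hB, Finset.mem_filter]
    have := (desSet_insPerm_eq_iff (delPerm τ) tfin T).mp (by rw [hins]; exact hd)
    exact ⟨Finset.mem_univ _, this.1, this.2.trans (hcond (delPerm τ))⟩
  · -- maps B to A
    intro σ hσ
    rw [hB, Finset.mem_filter] at hσ
    obtain ⟨-, hd, hiff⟩ := hσ
    rw [Finset.mem_filter]
    refine ⟨Finset.mem_univ _, ?_, ?_⟩
    · exact (desSet_insPerm_eq_iff σ tfin T).mpr ⟨hd, hiff.trans (hcond σ).symm⟩
    · rw [insPerm_last]; exact htv
  · intro τ hτ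
    rw [Finset.mem_filter] at hτ
    have hτl : τ (Fin.last (M+1)) = tfin := Fin.ext (by simp [htfin]; omega)
    rw [← hτl]; exact insPerm_delPerm τ
  · intro σ _
    exact delPerm_insPerm σ tfin
  · intro τ hτ
    rw [Finset.mem_filter] at hτ
    have hτl : τ (Fin.last (M+1)) = tfin := Fin.ext (by simp [htfin]; omega)
    have hins : insPerm (delPerm τ) tfin = τ := by rw [← hτl]; exact insPerm_delPerm τ
    have := invNum_insPerm (delPerm τ) tfin
    rw [hins] at this
    rw [this, show M + 1 - (tfin : ℕ) = M + 2 - t from by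
      have h0 : (tfin : ℕ) = t - 1 := rfl
      omega, pow_add, mul_comm]
def NNp (p : Polynomial ℝ) : Prop := ∀ k, 0 ≤ p.coeff k

lemma NNp_mul {p q : Polynomial ℝ} (hp : NNp p) (hq : NNp q) : NNp (p * q) := by
  intro k
  rw [Polynomial.coeff_mul]
  exact Finset.sum_nonneg fun x _ => mul_nonneg (hp _) (hq _)

lemma NNp_sum {α : Type*} (s : Finset α) (f : α → Polynomial ℝ) (h : ∀ a ∈ s, NNp (f a)) :
    NNp (∑ a ∈ s, f a) := by
  intro k
  rw [Polynomial.finset_sum_coeff]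
  exact Finset.sum_nonneg fun a ha => h a ha k

lemma iter_slc (a : ℕ → Polynomial ℝ) (B : ℕ)
    (H : ∀ u v, 1 ≤ u → u ≤ v → v + 1 ≤ B →
      ∀ m, 0 ≤ (a u * a v - a (u-1) * a (v+1)).coeff m) :
    ∀ k u v, k ≤ u - 1 → 1 ≤ u → u ≤ v → v + k ≤ B →
      ∀ m, 0 ≤ (a u * a v - a (u-k) * a (v+k)).coeff m := by
  intro k
  induction k with
  | zero =>
      intro u v _ _ _ _ m
      simp
  | succ k ih =>
      intro u v hk hu huv hvB m
      have h1 := ih u v (by omega) hu huv (by omega) m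
      have h2 := H (u-k) (v+k) (by omega) (by omega) (by omega) m
      have e : a u * a v - a (u-(k+1)) * a (v+(k+1)) =
          (a u * a v - a (u-k) * a (v+k)) + (a (u-k) * a (v+k) - a (u-k-1) * a (v+k+1)) := by
        rw [show u-(k+1) = u-k-1 by omega, show v+(k+1) = v+k+1 by omega]
        ring
      rw [e, Polynomial.coeff_add]
      have e2 : u - k - 1 = (u - k) - 1 := rfl
      linarith [h2]

/-- pairwise domination: `a s * a j ≥ a x * a y` coefficientwise when `x < min s j`,
`x + y = s + j`. -/
lemma pair_dom (a : ℕ → Polynomial ℝ) (B : ℕ)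
    (H : ∀ u v, 1 ≤ u → u ≤ v → v + 1 ≤ B →
      ∀ m, 0 ≤ (a u * a v - a (u-1) * a (v+1)).coeff m)
    (s j x y : ℕ) (hx1 : 1 ≤ x) (hxs : x < s) (hxj : x < j) (hsum : x + y = s + j)
    (hyB : y ≤ B) : ∀ m, (a x * a y).coeff m ≤ (a s * a j).coeff m := by
  intro m
  rcases le_total s j with hsj | hsj
  · have h := iter_slc a B H (s - x) s j (by omega) (by omega) hsj (by omega) m
    rw [show s - (s - x) = x by omega, show j + (s - x) = y by omega] at h
    rw [Polynomial.coeff_sub] at h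
    linarith
  · have h := iter_slc a B H (j - x) j s (by omega) (by omega) hsj (by omega) m
    rw [show j - (j - x) = x by omega, show s + (j - x) = y by omega] at h
    rw [Polynomial.coeff_sub] at h
    have : a j * a s = a s * a j := mul_comm _ _
    rw [this] at h
    linarith

lemma tails_slc (a : ℕ → Polynomial ℝ) (B : ℕ)
    (hpos : ∀ k, NNp (a k))
    (H : ∀ u v, 1 ≤ u → u ≤ v → v + 1 ≤ B →
      ∀ m, 0 ≤ (a u * a v - a (u-1) * a (v+1)).coeff m)
    (i j : ℕ) (hi : 2 ≤ i) (hij : i ≤ j) (hjB : j ≤ B) :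
    ∀ m, 0 ≤ ((∑ s ∈ Finset.Icc i B, a s) * (∑ s ∈ Finset.Icc j B, a s)
      - (∑ s ∈ Finset.Icc (i-1) B, a s) * (∑ s ∈ Finset.Icc (j+1) B, a s)).coeff m := by
  intro m
  set d := j + 1 - i with hd
  have hA1 : (∑ s ∈ Finset.Icc (i-1) B, a s) = a (i-1) + ∑ s ∈ Finset.Icc i B, a s := by
    rw [show Finset.Icc (i-1) B = insert (i-1) (Finset.Icc i B) from by
      ext x; simp only [Finset.mem_Icc, Finset.mem_insert]; omega]
    rw [Finset.sum_insert (by simp only [Finset.mem_Icc, not_and, not_le]; omega)]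
  have hA2 : (∑ s ∈ Finset.Icc j B, a s) = a j + ∑ s ∈ Finset.Icc (j+1) B, a s := by
    rw [show Finset.Icc j B = insert j (Finset.Icc (j+1) B) from by
      ext x; simp only [Finset.mem_Icc, Finset.mem_insert]; omega]
    rw [Finset.sum_insert (by simp only [Finset.mem_Icc, not_and, not_le]; omega)]
  have hre : (∑ s ∈ Finset.Icc (j+1) B, a s) = ∑ s ∈ Finset.Icc i (B-d), a (s+d) := by
    refine Finset.sum_nbij' (i := fun u => u - d) (j := fun s => s + d) ?_ ?_ ?_ ?_ ?_ <;>
      intro x hx <;> simp only [Finset.mem_Icc] at * <;> try omega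
    congr 1
    omega
  have key : (∑ s ∈ Finset.Icc i B, a s) * (∑ s ∈ Finset.Icc j B, a s)
      - (∑ s ∈ Finset.Icc (i-1) B, a s) * (∑ s ∈ Finset.Icc (j+1) B, a s)
      = (∑ s ∈ Finset.Icc i B, a s * a j) - ∑ s ∈ Finset.Icc i (B-d), a (i-1) * a (s+d) := by
    rw [hA1, hA2, ← Finset.sum_mul, ← Finset.mul_sum, ← hre]
    ring
  rw [key, Polynomial.coeff_sub, sub_nonneg, Polynomial.finset_sum_coeff,
    Polynomial.finset_sum_coeff]
  calc ∑ s ∈ Finset.Icc i (B-d), (a (i-1) * a (s+d)).coeff m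
      ≤ ∑ s ∈ Finset.Icc i (B-d), (a s * a j).coeff m := by
        apply Finset.sum_le_sum
        intro s hs
        simp only [Finset.mem_Icc] at hs
        exact pair_dom a B H s j (i-1) (s+d) (by omega) (by omega) (by omega)
          (by omega) (by omega) m
    _ ≤ ∑ s ∈ Finset.Icc i B, (a s * a j).coeff m := by
        apply Finset.sum_le_sum_of_subset_of_nonneg
        · exact Finset.Icc_subset_Icc_right (by omega)
        · intro s _ _
          exact NNp_mul (hpos s) (hpos j) m

lemma heads_slc (a : ℕ → Polynomial ℝ) (B : ℕ)
    (hpos : ∀ k, NNp (a k))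
    (H : ∀ u v, 1 ≤ u → u ≤ v → v + 1 ≤ B →
      ∀ m, 0 ≤ (a u * a v - a (u-1) * a (v+1)).coeff m)
    (i j : ℕ) (hi : 2 ≤ i) (hij : i ≤ j) (hjB : j ≤ B) :
    ∀ m, 0 ≤ ((∑ s ∈ Finset.Icc 1 (i-1), a s) * (∑ s ∈ Finset.Icc 1 (j-1), a s)
      - (∑ s ∈ Finset.Icc 1 (i-1-1), a s) * (∑ s ∈ Finset.Icc 1 (j+1-1), a s)).coeff m := by
  intro m
  set d := j + 1 - i with hd
  have hA1 : (∑ s ∈ Finset.Icc 1 (i-1), a s) = a (i-1) + ∑ s ∈ Finset.Icc 1 (i-1-1), a s := by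
    rw [show Finset.Icc 1 (i-1) = insert (i-1) (Finset.Icc 1 (i-1-1)) from by
      ext x; simp only [Finset.mem_Icc, Finset.mem_insert]; omega]
    rw [Finset.sum_insert (by simp only [Finset.mem_Icc, not_and, not_le]; omega)]
  have hA2 : (∑ s ∈ Finset.Icc 1 (j+1-1), a s) = a j + ∑ s ∈ Finset.Icc 1 (j-1), a s := by
    rw [show Finset.Icc 1 (j+1-1) = insert j (Finset.Icc 1 (j-1)) from by
      ext x; simp only [Finset.mem_Icc, Finset.mem_insert]; omega]
    rw [Finset.sum_insert (by simp only [Finset.mem_Icc, not_and, not_le]; omega)]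
  have hre : (∑ s ∈ Finset.Icc 1 (i-1-1), a s) = ∑ s ∈ Finset.Icc (1+d) (j-1), a (s-d) := by
    refine Finset.sum_nbij' (i := fun u => u + d) (j := fun s => s - d) ?_ ?_ ?_ ?_ ?_ <;>
      intro x hx <;> simp only [Finset.mem_Icc] at * <;> try omega
    congr 1
    omega
  have key : (∑ s ∈ Finset.Icc 1 (i-1), a s) * (∑ s ∈ Finset.Icc 1 (j-1), a s)
      - (∑ s ∈ Finset.Icc 1 (i-1-1), a s) * (∑ s ∈ Finset.Icc 1 (j+1-1), a s)
      = (∑ s ∈ Finset.Icc 1 (j-1), a (i-1) * a s)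
        - ∑ s ∈ Finset.Icc (1+d) (j-1), a (s-d) * a j := by
    rw [hA1, hA2, ← Finset.mul_sum]
    rw [show (∑ s ∈ Finset.Icc (1+d) (j-1), a (s-d) * a j)
      = (∑ s ∈ Finset.Icc (1+d) (j-1), a (s-d)) * a j from (Finset.sum_mul _ _ _).symm, ← hre]
    ring
  rw [key, Polynomial.coeff_sub, sub_nonneg, Polynomial.finset_sum_coeff,
    Polynomial.finset_sum_coeff]
  calc ∑ s ∈ Finset.Icc (1+d) (j-1), (a (s-d) * a j).coeff m
      ≤ ∑ s ∈ Finset.Icc (1+d) (j-1), (a (i-1) * a s).coeff m := by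
        apply Finset.sum_le_sum
        intro s hs
        simp only [Finset.mem_Icc] at hs
        exact pair_dom a B H (i-1) s (s-d) j (by omega) (by omega) (by omega)
          (by omega) (by omega) m
    _ ≤ ∑ s ∈ Finset.Icc 1 (j-1), (a (i-1) * a s).coeff m := by
        apply Finset.sum_le_sum_of_subset_of_nonneg
        · exact Finset.Icc_subset_Icc_left (by omega)
        · intro s _ _
          exact NNp_mul (hpos (i-1)) (hpos s) m
lemma NNp_Xpow (e : ℕ) : NNp ((X : Polynomial ℝ) ^ e) := by
  intro k
  rw [Polynomial.coeff_X_pow]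
  split <;> norm_num

lemma cpol_NN (T : Finset ℕ) (M t : ℕ) : NNp (cpol T M t) := fun k => cpol_coeff_nonneg T M t k

lemma cpol_zero (T : Finset ℕ) (M : ℕ) : cpol T M 0 = 0 := by
  rw [cpol, Finset.filter_false_of_mem, Finset.sum_empty]
  rintro π - ⟨-, h⟩
  omega

lemma cpol_junk (T : Finset ℕ) (M t : ℕ) (hsub : ¬ T ⊆ Finset.Icc 1 M) : cpol T M t = 0 := by
  rw [cpol, Finset.filter_false_of_mem, Finset.sum_empty]
  rintro π - ⟨hd, -⟩
  apply hsub
  rw [← hd]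
  intro k hk
  rw [Finset.mem_Icc]
  have := desSet_lt π hk
  omega

lemma factor_X (e1 e2 e3 e4 : ℕ) (h : e3 + e4 = e1 + e2) (P Q R S : Polynomial ℝ) :
    (X ^ e1 * P) * (X ^ e2 * Q) - (X ^ e3 * R) * (X ^ e4 * S)
      = X ^ (e1 + e2) * (P * Q - R * S) := by
  have h1 : (X : Polynomial ℝ) ^ e1 * P * (X ^ e2 * Q) = X ^ (e1+e2) * (P * Q) := by
    rw [pow_add]; ring
  have h2 : (X : Polynomial ℝ) ^ e3 * R * (X ^ e4 * S) = X ^ (e1+e2) * (R * S) := by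
    rw [← h, pow_add]; ring
  rw [h1, h2, mul_sub]

theorem cpol_slc : ∀ (M : ℕ) (T : Finset ℕ) (i j : ℕ), 1 ≤ i → i ≤ j → j + 1 ≤ M + 1 →
    ∀ m, 0 ≤ (cpol T M i * cpol T M j - cpol T M (i-1) * cpol T M (j+1)).coeff m := by
  intro M
  induction M with
  | zero =>
      intro T i j hi hij hj m
      exact (by omega : False).elim
  | succ K IH =>
      intro T i j hi hij hjM m
      by_cases hsub : T ⊆ Finset.Icc 1 (K+1)
      · by_cases hi1 : i = 1
        · subst hi1
          rw [show (1:ℕ) - 1 = 0 from rfl, cpol_zero, zero_mul, sub_zero]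
          exact NNp_mul (cpol_NN T (K+1) 1) (cpol_NN T (K+1) j) m
        · have hi2 : 2 ≤ i := by omega
          have hNN : ∀ k, NNp (cpol (T.erase (K+1)) K k) := fun k => cpol_NN _ _ _
          have H : ∀ u v, 1 ≤ u → u ≤ v → v + 1 ≤ K + 1 → ∀ m', 0 ≤
              (cpol (T.erase (K+1)) K u * cpol (T.erase (K+1)) K v
                - cpol (T.erase (K+1)) K (u-1) * cpol (T.erase (K+1)) K (v+1)).coeff m' :=
            fun u v h1 h2 h3 => IH (T.erase (K+1)) u v h1 h2 h3
          by_cases hT : (K+1) ∈ T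
          · have e1 := del_eq K T i (by omega) (by omega)
            have e2 := del_eq K T j (by omega) (by omega)
            have e3 := del_eq K T (i-1) (by omega) (by omega)
            have e4 := del_eq K T (j+1) (by omega) (by omega)
            rw [if_pos hT] at e1 e2 e3 e4
            rw [e1, e2, e3, e4,
              factor_X (K+2-i) (K+2-j) (K+2-(i-1)) (K+2-(j+1)) (by omega)]
            exact NNp_mul (NNp_Xpow _)
              (fun k => tails_slc (cpol (T.erase (K+1)) K) (K+1) hNN H i j hi2 hij
                (by omega) k) m
          · have e1 := del_eq K T i (by omega) (by omega)
            have e2 := del_eq K T j (by omega) (by omega)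
            have e3 := del_eq K T (i-1) (by omega) (by omega)
            have e4 := del_eq K T (j+1) (by omega) (by omega)
            rw [if_neg hT] at e1 e2 e3 e4
            rw [e1, e2, e3, e4,
              factor_X (K+2-i) (K+2-j) (K+2-(i-1)) (K+2-(j+1)) (by omega)]
            exact NNp_mul (NNp_Xpow _)
              (fun k => heads_slc (cpol (T.erase (K+1)) K) (K+1) hNN H i j hi2 hij
                (by omega) k) m
      · rw [cpol_junk T (K+1) i hsub, cpol_junk T (K+1) (i-1) hsub]
        simp

/-- the sequence `(b_k(S;q))_{k=0,…,m}` is strongly q-log concave. -/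
theorem stmt4 (S : Finset ℕ) (hS : S.Nonempty) (hpos : ∀ s ∈ S, 0 < s)
    (m : ℕ) (hm : m = S.max' hS)
    (b : ℕ → Polynomial ℝ) (hb0 : b 0 = 0)
    (hb : ∀ j, 1 ≤ j → j ≤ m →
      b j = ∑ π ∈ Finset.univ.filter (fun π : Equiv.Perm (Fin (m + 1)) =>
          DesSet π = S ∧ (π (Fin.last m) : ℕ) + 1 = j),
        X ^ invNum π) :
    StronglyQLogConcave 0 m b := by
  have hbc : ∀ t, t ≤ m → b t = cpol S m t := by
    intro t ht
    rcases Nat.eq_zero_or_pos t with rfl | h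
    · rw [hb0, cpol_zero]
    · exact hb t h ht
  have key2 : ∀ i j, 0 < i → i ≤ j → j < m →
      ∀ k, 0 ≤ (b i * b j - b (i-1) * b (j+1)).coeff k := by
    intro i j h0 hij hjm k
    rw [hbc i (by omega), hbc j (by omega), hbc (i-1) (by omega), hbc (j+1) (by omega)]
    exact cpol_slc m S i j h0 hij (by omega) k
  constructor
  · intro i j l hi0 hij hjl hlm hbi hbl
    intro hbj
    have him : 1 ≤ i := by
      rcases Nat.eq_zero_or_pos i with rfl | h
      · exact absurd hb0 hbi
      · exact h
    classical
    set A0 := (Finset.Icc i (j-1)).filter (fun k => b k ≠ 0) with hA0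
    have hAne : A0.Nonempty := by
      refine ⟨i, ?_⟩
      rw [hA0, Finset.mem_filter, Finset.mem_Icc]
      exact ⟨⟨le_refl i, by omega⟩, hbi⟩
    set a0 := A0.max' hAne with ha0
    have haA : a0 ∈ A0 := A0.max'_mem hAne
    rw [hA0, Finset.mem_filter, Finset.mem_Icc] at haA
    obtain ⟨⟨hia, haj⟩, hba⟩ := haA
    have hba1 : b (a0+1) = 0 := by
      by_cases h : a0 + 1 ≤ j - 1
      · by_contra hne
        have hmem : a0 + 1 ∈ A0 := by
          rw [hA0, Finset.mem_filter, Finset.mem_Icc]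
          exact ⟨⟨by omega, h⟩, hne⟩
        have := A0.le_max' _ hmem
        omega
      · rw [show a0 + 1 = j by omega]
        exact hbj
    have hkey := key2 (a0+1) (l-1) (by omega) (by omega) (by omega)
    rw [show (a0+1) - 1 = a0 by omega, show (l-1) + 1 = l by omega, hba1, zero_mul] at hkey
    have hNN : ∀ k, 0 ≤ (b a0 * b l).coeff k := by
      intro k
      rw [hbc a0 (by omega), hbc l (by omega)]
      exact NNp_mul (cpol_NN S m a0) (cpol_NN S m l) k
    have hzero : b a0 * b l = 0 := by
      ext k
      rw [Polynomial.coeff_zero]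
      have h1 := hkey k
      rw [zero_sub, Polynomial.coeff_neg] at h1
      have h2 := hNN k
      linarith
    rcases mul_eq_zero.mp hzero with h | h
    · exact hba h
    · exact hbl h
  · intro i j h0 hij hjm k
    exact key2 i j h0 hij hjm k

end
end
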